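/- For a forest F with n vertices, the major index has the same distribution over all labelings as the inversion number: ∑_w q^{maj(F,w)} = ∑_w q^{inv(F,w)}. -/

import Mathlib

open Finset

open scoped Classical

noncomputable section

variable {n : ℕ}

/-- `u <_F v` : strictly below in the forest order. -/
def strictR (r : Fin n → Fin n → Prop) (u v : Fin n) : Prop := r u v ∧ u ≠ v

/-- A naturally indexed plane forest structure on `Fin n`: a partial order whose
principal up-sets are chains (roots maximal), with natural indexing. -/
def IsForest (r : Fin n → Fin n → Prop) : Prop :=
  IsPartialOrder (Fin n) r ∧ (∀ v u u', r v u → r v u' → r u u' ∨ r u' u) ∧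
    ∀ u v, r u v → u ≤ v

/-- `h_v`: size of the principal order ideal generated by `v`. -/
def hook (r : Fin n → Fin n → Prop) (v : Fin n) : ℕ :=
  (univ.filter fun u => r u v).card

/-- q-integer `[m] = 1 + q + ... + q^(m-1)`. -/
def qInt {R : Type*} [CommRing R] (q : R) (m : ℕ) : R := ∑ i ∈ Finset.range m, q ^ i

/-- inversions of an (unsigned) labeling. -/
def invF (r : Fin n → Fin n → Prop) (w : Equiv.Perm (Fin n)) : ℕ :=
  (univ.filter fun uv : Fin n × Fin n => strictR r uv.1 uv.2 ∧ w uv.2 < w uv.1).card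

/-- a natural (order-preserving) labeling. -/
def NaturalL (r : Fin n → Fin n → Prop) (w : Equiv.Perm (Fin n)) : Prop :=
  ∀ u v, strictR r u v → w u < w v

/-- bottom-to-top maximum positions. -/
def BtmaxF (r : Fin n → Fin n → Prop) (w : Equiv.Perm (Fin n)) : Finset (Fin n) :=
  univ.filter fun v => ∀ u, strictR r u v → w u < w v

/-- label (in 1..n, with convention n+1 for roots) of the parent of `v`;
for a naturally indexed forest the parent of `v` is the minimal-index vertex strictly above `v`. -/
def parentW (r : Fin n → Fin n → Prop) (w : Equiv.Perm (Fin n)) (v : Fin n) : ℕ :=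
  if h : (univ.filter fun u => strictR r v u).Nonempty then
    (w ((univ.filter fun u => strictR r v u).min' h) : ℕ) + 1
  else n + 1

/-- major index: sum of hooks over descents. -/
def majF (r : Fin n → Fin n → Prop) (w : Equiv.Perm (Fin n)) : ℕ :=
  ∑ v ∈ univ.filter (fun v => parentW r w v < (w v : ℕ) + 1), hook r v

/-- M-code of a labeled forest. -/
def mcodeF (r : Fin n → Fin n → Prop) (w : Equiv.Perm (Fin n)) (i : Fin n) : ℕ :=
  if (w i : ℕ) + 1 < parentW r w i then
    (univ.filter fun u => strictR r u i ∧ (w i : ℕ) + 1 ≤ (w u : ℕ) + 1 ∧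
      (w u : ℕ) + 1 ≤ parentW r w i).card
  else
    (univ.filter fun u => strictR r u i ∧ ¬(parentW r w i ≤ (w u : ℕ) + 1 ∧
      (w u : ℕ) + 1 ≤ (w i : ℕ) + 1)).card

/-- cyclic bottom-to-top maxima. -/
def CbtmaxF (r : Fin n → Fin n → Prop) (w : Equiv.Perm (Fin n)) : Finset (Fin n) :=
  univ.filter fun v =>
    if (w v : ℕ) + 1 < parentW r w v then
      ∀ u, strictR r u v → ¬((w v : ℕ) + 1 ≤ (w u : ℕ) + 1 ∧ (w u : ℕ) + 1 ≤ parentW r w v)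
    else
      ∀ u, strictR r u v → (parentW r w v ≤ (w u : ℕ) + 1 ∧ (w u : ℕ) + 1 ≤ (w v : ℕ) + 1)

/-! ### Signed labelings, encoded as a permutation together with a sign function.
`wVal (σ, ε)` is the corresponding signed labeling `V(F) → {±1, …, ±n}`;
this is a bijective encoding of the set `W_B(F)` of signed labelings. -/

def wVal (p : Equiv.Perm (Fin n) × (Fin n → Bool)) (v : Fin n) : ℤ :=
  (if p.2 v then -1 else 1) * ((p.1 v : ℤ) + 1)

/-- number of negative labels. -/
def n1F (w : Fin n → ℤ) : ℕ := (univ.filter fun v => w v < 0).card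

/-- inversions of a signed labeling. -/
def invSF (r : Fin n → Fin n → Prop) (w : Fin n → ℤ) : ℕ :=
  (univ.filter fun uv : Fin n × Fin n => strictR r uv.1 uv.2 ∧ w uv.2 < w uv.1).card

def n2F (r : Fin n → Fin n → Prop) (w : Fin n → ℤ) : ℕ :=
  (univ.filter fun uv : Fin n × Fin n => strictR r uv.1 uv.2 ∧ w uv.1 + w uv.2 < 0).card

def invBF (r : Fin n → Fin n → Prop) (w : Fin n → ℤ) : ℕ := invSF r w + n1F w + n2F r w

def invDF (r : Fin n → Fin n → Prop) (w : Fin n → ℤ) : ℕ := invSF r w + n2F r w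

/-- the A-code of a signed labeled forest. -/
def acodeF (r : Fin n → Fin n → Prop) (w : Fin n → ℤ) (i : Fin n) : ℕ :=
  (univ.filter fun u => strictR r u i ∧ w i < w u).card +
  (univ.filter fun u => strictR r u i ∧ w u + w i < 0).card +
  (if w i < 0 then 1 else 0)

/-- signed bottom-to-top maximum positions. -/
def BtmaxBF (r : Fin n → Fin n → Prop) (w : Fin n → ℤ) : Finset (Fin n) :=
  univ.filter fun v => 0 < w v ∧ ∀ u, strictR r u v → |w u| < w v

def leafF (r : Fin n → Fin n → Prop) (v : Fin n) : Prop := ∀ u, ¬ strictR r u v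

/-- type D bottom-to-top maximum positions. -/
def BtmaxDF (r : Fin n → Fin n → Prop) (w : Fin n → ℤ) : Finset (Fin n) :=
  univ.filter fun v => ¬ leafF r v ∧ 0 < w v ∧ ∀ u, strictR r u v → |w u| < w v

/-! ### The map φ: one sorting step towards a natural labeling, recording the A-code. -/

def stepA (r : Fin n → Fin n → Prop) (i : Fin n) (w : Fin n → ℤ) : Fin n → ℤ :=
  let A := (univ.filter fun u => r u i).image fun u => (w u).natAbs
  let M := A.max.getD 0
  let l := (A.erase M).sort (· ≤ ·)
  fun u =>
    if u = i then (M : ℤ)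
    else if strictR r u i then
      (if w u < 0 then -1 else 1) *
        (l.getD ((univ.filter fun u' => strictR r u' i ∧ (w u').natAbs < (w u).natAbs).card) 0)
    else w u

/-- processing vertices `v_n, v_{n-1}, …, v_1` yields the natural labeling `w'`. -/
def sortA (r : Fin n → Fin n → Prop) (w : Fin n → ℤ) : Fin n → ℤ :=
  ((List.finRange n).reverse).foldl (fun w i => stepA r i w) w

/-! ### The sorting algorithm for the sorting index. -/

/-- standardized label of `x` in the subtree rooted at `u`. -/
def stdVal (r : Fin n → Fin n → Prop) (u : Fin n) (w : Fin n → ℤ) (x : Fin n) : ℤ :=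
  (if w x < 0 then -1 else 1) * (((univ.filter fun y => r y u ∧ |w y| < |w x|).card : ℤ) + 1)

/-- one step of the forest sorting algorithm (placing value `i+1`); the state is
(current labeling, recorded B-code, running total). -/
def sortStepB (r : Fin n → Fin n → Prop) (i : Fin n)
    (s : (Fin n → ℤ) × (Fin n → ℤ) × ℤ) : (Fin n → ℤ) × (Fin n → ℤ) × ℤ :=
  let w := s.1
  let v := ((univ.filter fun x => |w x| = (i : ℤ) + 1).max).getD i
  let u := ((univ.filter fun x => r v x ∧ |w x| ≤ (i : ℤ) + 1).max).getD i
  let amt : ℤ := |stdVal r u w v| - stdVal r u w u - (if w u < 0 then 1 else 0)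
  let w' := if 0 < w v then Function.update (Function.update w u (w v)) v (w u)
            else Function.update (Function.update w u (-(w v))) v (-(w u))
  (w', Function.update s.2.1 u amt, s.2.2 + amt)

def runB (r : Fin n → Fin n → Prop) (w : Fin n → ℤ) : (Fin n → ℤ) × (Fin n → ℤ) × ℤ :=
  ((List.finRange n).reverse).foldl (fun s i => sortStepB r i s) (w, fun _ => (0 : ℤ), 0)

/-- the natural labeling produced by the sorting algorithm. -/
def sortedB (r : Fin n → Fin n → Prop) (w : Fin n → ℤ) : Fin n → ℤ := (runB r w).1

/-- B-code: `b_i` = amount contributed at the step in which `u = v_i`. -/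
def bcodeB (r : Fin n → Fin n → Prop) (w : Fin n → ℤ) : Fin n → ℤ := (runB r w).2.1

/-- the sorting index of a signed labeled forest. -/
def sorBF (r : Fin n → Fin n → Prop) (w : Fin n → ℤ) : ℤ := (runB r w).2.2

/-! ### Cycles of signed permutations. -/

/-- the extension of `g : Fin n → ℤ` (a signed permutation written in one-line notation,
`g i` = image of `i+1`) to `{±1, …, ±n} ⊆ ℤ`. -/
def extB (g : Fin n → ℤ) : ℤ → ℤ := fun k =>
  if h : 0 < k ∧ k ≤ (n : ℤ) then g ⟨k.toNat - 1, by omega⟩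
  else if h' : -(n : ℤ) ≤ k ∧ k < 0 then -g ⟨(-k).toNat - 1, by omega⟩
  else k

/-- absolute values of the minimal-in-absolute-value elements of balanced cycles. -/
def CycBperm (g : Fin n → ℤ) : Finset ℕ :=
  (Finset.Icc 1 n).filter fun m =>
    (∀ j, j ≤ 2 * n → (extB g)^[j] (m : ℤ) ≠ -(m : ℤ)) ∧
    ∀ j, j ≤ 2 * n → (m : ℤ) ≤ |(extB g)^[j] (m : ℤ)|

/-- the signed permutation `w ∘ w'⁻¹`, where `w'` is the sorted (natural) labeling. -/
def gOf (r : Fin n → Fin n → Prop) (w : Fin n → ℤ) : Fin n → ℤ := fun i =>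
  w (((univ.filter fun v => sortedB r w v = (i : ℤ) + 1).max).getD i)

/-- type B minimal cycle vertices of a signed labeled forest. -/
def CycBF (r : Fin n → Fin n → Prop) (w : Fin n → ℤ) : Finset (Fin n) :=
  univ.filter fun v => (sortedB r w v).toNat ∈ CycBperm (gOf r w)

/-! ### Signed permutations as words. -/

/-- the inverse of the signed permutation `g`. -/
def ginv (g : Fin n → ℤ) (i : Fin n) : ℤ :=
  let j := ((univ.filter fun x => |g x| = (i : ℤ) + 1).max).getD i
  if 0 < g j then (j : ℤ) + 1 else -((j : ℤ) + 1)

def invP (σ : Equiv.Perm (Fin n)) : ℕ :=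
  (univ.filter fun ij : Fin n × Fin n => ij.1 < ij.2 ∧ σ ij.2 < σ ij.1).card

def invL (g : Fin n → ℤ) : ℕ :=
  (univ.filter fun ij : Fin n × Fin n => ij.1 < ij.2 ∧ g ij.2 < g ij.1).card

def n2L (g : Fin n → ℤ) : ℕ :=
  (univ.filter fun ij : Fin n × Fin n => ij.1 < ij.2 ∧ g ij.1 + g ij.2 < 0).card

/-- one step of Straight Selection Sort for signed permutations (placing value `i+1`). -/
def sorStepP (i : Fin n) (s : (Fin n → ℤ) × ℤ) : (Fin n → ℤ) × ℤ :=
  let g := s.1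
  let j := ((univ.filter fun x => |g x| = (i : ℤ) + 1).max).getD i
  let amt : ℤ := if 0 < g j then ((i : ℤ) + 1) - ((j : ℤ) + 1)
                 else ((i : ℤ) + 1) + ((j : ℤ) + 1) - 1
  let g' := if 0 < g j then Function.update (Function.update g j (g i)) i (g j)
            else Function.update (Function.update g j (-(g i))) i (-(g j))
  (g', s.2 + amt)

/-- the sorting index of a signed permutation. -/
def sorBperm (g : Fin n → ℤ) : ℤ :=
  (((List.finRange n).reverse).foldl (fun s i => sorStepP i s) (g, 0)).2

section SecA

variable {r : Fin n → Fin n → Prop}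

lemma fr_refl (hF : IsForest r) (v : Fin n) : r v v := hF.1.toIsPreorder.toRefl.refl v

lemma fr_trans (hF : IsForest r) {a b c : Fin n} (h1 : r a b) (h2 : r b c) : r a c :=
  hF.1.toIsPreorder.toIsTrans.trans _ _ _ h1 h2

lemma fr_antisymm (hF : IsForest r) {a b : Fin n} (h1 : r a b) (h2 : r b a) : a = b :=
  hF.1.toAntisymm.antisymm _ _ h1 h2

lemma fr_nat (hF : IsForest r) {a b : Fin n} (h1 : r a b) : a ≤ b := hF.2.2 _ _ h1

lemma strictR_trans_left (hF : IsForest r) {a b c : Fin n} (h1 : strictR r a b) (h2 : r b c) :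
    strictR r a c := by
  refine ⟨fr_trans hF h1.1 h2, ?_⟩
  rintro rfl
  exact h1.2 (fr_antisymm hF h1.1 h2)

lemma strictR_trans_right (hF : IsForest r) {a b c : Fin n} (h1 : r a b) (h2 : strictR r b c) :
    strictR r a c := by
  refine ⟨fr_trans hF h1 h2.1, ?_⟩
  rintro rfl
  exact h2.2 (fr_antisymm hF h2.1 h1)

/-- the strict up-set (set of strict ancestors) of `v`. -/
def sUp (r : Fin n → Fin n → Prop) (v : Fin n) : Finset (Fin n) :=
  univ.filter fun u => strictR r v u

lemma mem_sUp {v u : Fin n} : u ∈ sUp r v ↔ strictR r v u := by simp [sUp]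

/-- comparability of two ancestors. -/
lemma anc_comp (hF : IsForest r) {v a b : Fin n} (ha : r v a) (hb : r v b) :
    r a b ∨ r b a := hF.2.1 v a b ha hb

/-- the parent of `v` (junk value `v` for roots). -/
def prnt (r : Fin n → Fin n → Prop) (v : Fin n) : Fin n :=
  if h : (sUp r v).Nonempty then (sUp r v).min' h else v

lemma prnt_mem {v : Fin n} (h : (sUp r v).Nonempty) : strictR r v (prnt r v) := by
  rw [prnt, dif_pos h]
  exact mem_sUp.1 ((sUp r v).min'_mem h)

lemma prnt_min {v u : Fin n} (h : (sUp r v).Nonempty) (hu : u ∈ sUp r v) : prnt r v ≤ u := by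
  rw [prnt, dif_pos h]; exact Finset.min'_le _ _ hu

lemma prnt_strict_below (hF : IsForest r) {v u : Fin n} (h : (sUp r v).Nonempty)
    (hu : u ∈ sUp r v) (hne : u ≠ prnt r v) : strictR r (prnt r v) u := by
  have hp := prnt_mem (r := r) h
  rcases anc_comp hF (v := v) (prnt_mem h).1 (mem_sUp.1 hu).1 with hc | hc
  · exact ⟨hc, fun e => hne e.symm⟩
  · exact absurd (le_antisymm (prnt_min h hu) (fr_nat hF hc)) (fun e => hne e.symm)

lemma parentW_of_nonroot {w : Equiv.Perm (Fin n)} {v : Fin n} (h : (sUp r v).Nonempty) :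
    parentW r w v = (w (prnt r v) : ℕ) + 1 := by
  rw [parentW, show (univ.filter fun u => strictR r v u) = sUp r v from rfl, dif_pos h, prnt,
    dif_pos h]

lemma parentW_of_root {w : Equiv.Perm (Fin n)} {v : Fin n} (h : ¬ (sUp r v).Nonempty) :
    parentW r w v = n + 1 := by
  rw [parentW, show (univ.filter fun u => strictR r v u) = sUp r v from rfl, dif_neg h]

/-- the descent set. -/
def des (r : Fin n → Fin n → Prop) (w : Equiv.Perm (Fin n)) : Finset (Fin n) :=
  univ.filter fun v => (sUp r v).Nonempty ∧ w (prnt r v) < w v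

lemma mem_des {w : Equiv.Perm (Fin n)} {v : Fin n} :
    v ∈ des r w ↔ (sUp r v).Nonempty ∧ w (prnt r v) < w v := by simp [des]

lemma majF_eq_sum_des (w : Equiv.Perm (Fin n)) : majF r w = ∑ v ∈ des r w, hook r v := by
  unfold majF des
  congr 1
  apply filter_congr
  intro v _
  by_cases h : (sUp r v).Nonempty
  · rw [parentW_of_nonroot h]
    simp only [h, true_and]
    constructor
    · intro hlt; exact Fin.lt_def.2 (by omega)
    · intro hlt; have := Fin.lt_def.1 hlt; omega
  · rw [parentW_of_root h]
    have : (w v : ℕ) < n := (w v).isLt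
    simp only [h, false_and, iff_false]
    omega

/-- children of `x`. -/
def chl (r : Fin n → Fin n → Prop) (x : Fin n) : Finset (Fin n) :=
  univ.filter fun v => (sUp r v).Nonempty ∧ prnt r v = x

lemma mem_chl {x v : Fin n} : v ∈ chl r x ↔ (sUp r v).Nonempty ∧ prnt r v = x := by simp [chl]

/-- the down-set of `v`. -/
def dnn (r : Fin n → Fin n → Prop) (v : Fin n) : Finset (Fin n) :=
  univ.filter fun u => r u v

lemma mem_dnn {v u : Fin n} : u ∈ dnn r v ↔ r u v := by simp [dnn]

lemma hook_eq_card_dnn (v : Fin n) : hook r v = (dnn r v).card := rfl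

lemma chl_mem_strict (hF : IsForest r) {x v : Fin n} (h : v ∈ chl r x) : strictR r v x := by
  rcases mem_chl.1 h with ⟨h1, h2⟩
  have := prnt_mem (r := r) h1
  rwa [h2] at this

/-- every strict descendant of `x` lies below a unique child of `x`. -/
lemma exists_child (hF : IsForest r) {x u : Fin n} (hu : strictR r u x) :
    ∃ c ∈ chl r x, r u c := by
  classical
  set A : Finset (Fin n) := univ.filter (fun z => r u z ∧ strictR r z x) with hA
  have hAne : A.Nonempty := ⟨u, by simp [hA, fr_refl hF, hu]⟩
  set c := A.max' hAne with hc
  have hcA : c ∈ A := A.max'_mem hAne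
  have hcu : r u c := (by simpa [hA] using hcA : r u c ∧ strictR r c x).1
  have hcx : strictR r c x := (by simpa [hA] using hcA : r u c ∧ strictR r c x).2
  have hne : (sUp r c).Nonempty := ⟨x, mem_sUp.2 hcx⟩
  refine ⟨c, mem_chl.2 ⟨hne, ?_⟩, hcu⟩
  -- prnt c = x : show x is the minimum of sUp c
  have hxmem : x ∈ sUp r c := mem_sUp.2 hcx
  by_contra hne2
  have hstr : strictR r (prnt r c) x := prnt_strict_below hF hne hxmem (fun e => hne2 e.symm)
  -- then prnt c ∈ A and c < prnt c, contradiction with maximality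
  have hmemA : prnt r c ∈ A := by
    simp only [hA, mem_filter, mem_univ, true_and]
    exact ⟨fr_trans hF hcu (prnt_mem hne).1, hstr⟩
  have h1 : c < prnt r c := by
    have := fr_nat hF (prnt_mem hne).1
    exact lt_of_le_of_ne this (prnt_mem hne).2
  exact absurd (A.le_max' _ hmemA) (not_le.2 h1)

lemma child_unique (hF : IsForest r) {x c c' u : Fin n} (hc : c ∈ chl r x) (hc' : c' ∈ chl r x)
    (h1 : r u c) (h2 : r u c') : c = c' := by
  by_contra hne
  rcases anc_comp hF h1 h2 with h | h
  · -- c strictly below c', c' is strict ancestor of c; but prnt c = x with x index min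
    have hscc : strictR r c c' := ⟨h, hne⟩
    have hnec : (sUp r c).Nonempty := (mem_chl.1 hc).1
    have hle : prnt r c ≤ c' := prnt_min hnec (mem_sUp.2 hscc)
    have hpx : prnt r c = x := (mem_chl.1 hc).2
    have hcx' : strictR r c' x := chl_mem_strict hF hc'
    have : c' < x := lt_of_le_of_ne (fr_nat hF hcx'.1) hcx'.2
    rw [hpx] at hle
    exact absurd hle (not_le.2 this)
  · have hscc : strictR r c' c := ⟨h, fun e => hne e.symm⟩
    have hnec : (sUp r c').Nonempty := (mem_chl.1 hc').1
    have hle : prnt r c' ≤ c := prnt_min hnec (mem_sUp.2 hscc)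
    have hpx : prnt r c' = x := (mem_chl.1 hc').2
    have hcx : strictR r c x := chl_mem_strict hF hc
    have : c < x := lt_of_le_of_ne (fr_nat hF hcx.1) hcx.2
    rw [hpx] at hle
    exact absurd hle (not_le.2 this)

lemma strict_dnn_eq_biUnion (hF : IsForest r) (x : Fin n) :
    (univ.filter fun u => strictR r u x) = (chl r x).biUnion (fun c => dnn r c) := by
  ext u
  simp only [mem_filter, mem_univ, true_and, mem_biUnion]
  constructor
  · intro hu
    rcases exists_child hF hu with ⟨c, hc, hcu⟩
    exact ⟨c, hc, mem_dnn.2 hcu⟩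
  · rintro ⟨c, hc, hcu⟩
    exact strictR_trans_right hF (mem_dnn.1 hcu) (chl_mem_strict hF hc)

lemma sum_hook_chl (hF : IsForest r) (x : Fin n) :
    (∑ c ∈ chl r x, hook r c) + 1 = hook r x := by
  classical
  have hx : dnn r x = insert x (univ.filter fun u => strictR r u x) := by
    ext u
    rw [mem_dnn, Finset.mem_insert, Finset.mem_filter]
    simp only [Finset.mem_univ, true_and, strictR]
    constructor
    · intro h
      by_cases he : u = x
      · exact Or.inl he
      · exact Or.inr ⟨h, he⟩
    · rintro (rfl | ⟨h, _⟩)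
      · exact fr_refl hF u
      · exact h
  have hdisj : ∀ c1 ∈ chl r x, ∀ c2 ∈ chl r x, c1 ≠ c2 → Disjoint (dnn r c1) (dnn r c2) := by
    intro c1 h1 c2 h2 hne
    rw [Finset.disjoint_left]
    intro u hu1 hu2
    exact hne (child_unique hF h1 h2 (mem_dnn.1 hu1) (mem_dnn.1 hu2))
  have hcard : (univ.filter fun u => strictR r u x).card = ∑ c ∈ chl r x, hook r c := by
    rw [strict_dnn_eq_biUnion hF x, Finset.card_biUnion hdisj]
    rfl
  have hxnotmem : x ∉ (univ.filter fun u => strictR r u x) := by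
    intro h; exact (Finset.mem_filter.1 h).2.2 rfl
  rw [hook_eq_card_dnn, hx, Finset.card_insert_of_notMem hxnotmem, hcard]


/-- the root above `v`. -/
def rootOf (r : Fin n → Fin n → Prop) (v : Fin n) : Fin n :=
  if h : (univ.filter fun u => r v u).Nonempty then (univ.filter fun u => r v u).max' h else v

lemma up_nonempty (hF : IsForest r) (v : Fin n) : (univ.filter fun u => r v u).Nonempty :=
  ⟨v, by simp [fr_refl hF]⟩

lemma rootOf_eq_max' (hF : IsForest r) (v : Fin n) :
    rootOf r v = (univ.filter fun u => r v u).max' (up_nonempty hF v) := by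
  rw [rootOf, dif_pos (up_nonempty hF v)]

lemma r_rootOf (hF : IsForest r) (v : Fin n) : r v (rootOf r v) := by
  rw [rootOf_eq_max' hF]
  have := Finset.max'_mem (univ.filter fun u => r v u) (up_nonempty hF v)
  simpa using this

lemma rootOf_isRoot (hF : IsForest r) (v : Fin n) : ¬ (sUp r (rootOf r v)).Nonempty := by
  rintro ⟨z, hz⟩
  rw [mem_sUp] at hz
  have hvz : r v z := fr_trans hF (r_rootOf hF v) hz.1
  have hle : z ≤ rootOf r v := by
    rw [rootOf_eq_max' hF]
    exact Finset.le_max' _ _ (by simp [hvz])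
  have : rootOf r v < z := lt_of_le_of_ne (fr_nat hF hz.1) hz.2
  omega

lemma root_unique (hF : IsForest r) {v t : Fin n} (h : r v t) (ht : ¬ (sUp r t).Nonempty) :
    rootOf r v = t := by
  have h1 : r v (rootOf r v) := r_rootOf hF v
  rcases anc_comp hF h h1 with hc | hc
  · by_cases he : t = rootOf r v
    · exact he.symm
    · exact absurd ⟨rootOf r v, mem_sUp.2 ⟨hc, he⟩⟩ ht
  · by_cases he : rootOf r v = t
    · exact he
    · exact absurd ⟨t, mem_sUp.2 ⟨hc, he⟩⟩ (rootOf_isRoot hF v)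

lemma rootOf_eq_of_r (hF : IsForest r) {u v : Fin n} (h : r u v) : rootOf r u = rootOf r v :=
  root_unique hF (fr_trans hF h (r_rootOf hF v)) (rootOf_isRoot hF v)

lemma rootOf_self_of_root (hF : IsForest r) {v : Fin n} (hv : ¬ (sUp r v).Nonempty) :
    rootOf r v = v := root_unique hF (fr_refl hF v) hv

/-- hooks of the roots inside a comparability-closed set sum to its size. -/
lemma sum_hook_roots (hF : IsForest r) (E : Finset (Fin n))
    (hEc : ∀ u ∈ E, ∀ z, (strictR r u z ∨ strictR r z u) → z ∈ E) :
    ∑ u ∈ E.filter (fun u => ¬ (sUp r u).Nonempty), hook r u = E.card := by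
  classical
  have hmemE : ∀ u ∈ E, ∀ z, r z u → z ∈ E := by
    intro u hu z hz
    by_cases he : z = u
    · rw [he]; exact hu
    · exact hEc u hu z (Or.inr ⟨hz, he⟩)
  have hrootE : ∀ u ∈ E, rootOf r u ∈ E := by
    intro u hu
    by_cases he : rootOf r u = u
    · rw [he]; exact hu
    · exact hEc u hu _ (Or.inl ⟨r_rootOf hF u, fun e => he e.symm⟩)
  have hcover : E = (E.filter (fun u => ¬ (sUp r u).Nonempty)).biUnion (fun c => dnn r c) := by
    ext u
    simp only [mem_biUnion, mem_filter, mem_dnn]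
    constructor
    · intro hu
      refine ⟨rootOf r u, ⟨?_, ?_⟩, ?_⟩
      · exact hrootE u hu
      · exact rootOf_isRoot hF u
      · exact r_rootOf hF u
    · rintro ⟨c, ⟨hc, _⟩, hcu⟩
      exact hmemE c hc u hcu
  have hdisj : ∀ c1 ∈ E.filter (fun u => ¬ (sUp r u).Nonempty),
      ∀ c2 ∈ E.filter (fun u => ¬ (sUp r u).Nonempty), c1 ≠ c2 → Disjoint (dnn r c1) (dnn r c2) := by
    intro c1 h1 c2 h2 hne
    rw [Finset.disjoint_left]
    intro u hu1 hu2
    rw [mem_dnn] at hu1 hu2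
    rcases anc_comp hF hu1 hu2 with hc | hc
    · exact (mem_filter.1 h1).2 ⟨c2, mem_sUp.2 ⟨hc, hne⟩⟩
    · exact (mem_filter.1 h2).2 ⟨c1, mem_sUp.2 ⟨hc, fun e => hne e.symm⟩⟩
  conv_rhs => rw [hcover]
  rw [Finset.card_biUnion hdisj]
  rfl

end SecA

section SecB

variable {n : ℕ} {r : Fin n → Fin n → Prop}

/-- ascending sorted list of `B`. -/
def lAsc (B : Finset (Fin n)) : List (Fin n) := B.sort (· ≤ ·)

/-- descending sorted list of `B`. -/
def lDesc (B : Finset (Fin n)) : List (Fin n) := (lAsc B).reverse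

/-- the downward rotation of the values in `B`. -/
def rotP (B : Finset (Fin n)) : Equiv.Perm (Fin n) := (lDesc B).formPerm

lemma length_lAsc (B : Finset (Fin n)) : (lAsc B).length = B.card := Finset.length_sort _

lemma length_lDesc (B : Finset (Fin n)) : (lDesc B).length = B.card := by
  rw [lDesc, List.length_reverse, length_lAsc]

lemma nodup_lAsc (B : Finset (Fin n)) : (lAsc B).Nodup := B.sort_nodup _

lemma nodup_lDesc (B : Finset (Fin n)) : (lDesc B).Nodup := by
  rw [lDesc, List.nodup_reverse]; exact nodup_lAsc B

lemma mem_lAsc {B : Finset (Fin n)} {b : Fin n} : b ∈ lAsc B ↔ b ∈ B := Finset.mem_sort _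

lemma mem_lDesc {B : Finset (Fin n)} {b : Fin n} : b ∈ lDesc B ↔ b ∈ B := by
  rw [lDesc, List.mem_reverse]; exact mem_lAsc

lemma lasc_lt_iff {B : Finset (Fin n)} {i j : ℕ} (hi : i < (lAsc B).length)
    (hj : j < (lAsc B).length) : (lAsc B)[i] < (lAsc B)[j] ↔ i < j := by
  constructor
  · intro h
    by_contra hc
    rcases Nat.lt_or_ge j i with h1 | h1
    · have := List.Pairwise.rel_get_of_lt (B.sortedLT_sort).pairwise (a := ⟨j, hj⟩) (b := ⟨i, hi⟩) h1
      simp only [List.get_eq_getElem] at this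
      exact absurd h (by simp [lAsc] at this ⊢; omega)
    · have hij : i = j := by omega
      subst hij
      exact lt_irrefl _ h
  · intro h
    have := List.Pairwise.rel_get_of_lt (B.sortedLT_sort).pairwise (a := ⟨i, hi⟩) (b := ⟨j, hj⟩) h
    simpa [lAsc] using this

lemma ldesc_eq_lasc {B : Finset (Fin n)} {i : ℕ} (hi : i < (lDesc B).length) :
    (lDesc B)[i] = (lAsc B)[(lAsc B).length - 1 - i]'(by
      rw [lDesc, List.length_reverse] at hi; omega) := by
  simp only [lDesc]
  rw [List.getElem_reverse]

lemma ldesc_lt_iff {B : Finset (Fin n)} {i j : ℕ} (hi : i < (lDesc B).length)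
    (hj : j < (lDesc B).length) : (lDesc B)[i] < (lDesc B)[j] ↔ j < i := by
  have hi' := hi; have hj' := hj
  rw [lDesc, List.length_reverse] at hi' hj'
  rw [ldesc_eq_lasc hi, ldesc_eq_lasc hj, lasc_lt_iff (by omega) (by omega)]
  omega

lemma ldesc_last {B : Finset (Fin n)} (hB : B.Nonempty) :
    (lDesc B)[B.card - 1]'(by rw [length_lDesc]; have := Finset.card_pos.2 hB; omega) =
      B.min' hB := by
  have hc := Finset.card_pos.2 hB
  rw [ldesc_eq_lasc]
  have h0 : (lAsc B).length - 1 - (B.card - 1) = 0 := by rw [length_lAsc]; omega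
  simp_rw [h0]
  exact B.sorted_zero_eq_min' (h := by rw [Finset.length_sort]; omega)

lemma ldesc_zero {B : Finset (Fin n)} (hB : B.Nonempty) :
    (lDesc B)[0]'(by rw [length_lDesc]; have := Finset.card_pos.2 hB; omega) =
      B.max' hB := by
  have hc := Finset.card_pos.2 hB
  rw [ldesc_eq_lasc]
  have h0 : (lAsc B).length - 1 - 0 = (lAsc B).length - 1 := by omega
  simp_rw [h0]
  exact B.sorted_last_eq_max' (h := by rw [Finset.length_sort]; omega)

lemma rot_fix {B : Finset (Fin n)} {a : Fin n} (ha : a ∉ B) : rotP B a = a :=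
  List.formPerm_apply_of_notMem (by rwa [mem_lDesc])

lemma rot_mem {B : Finset (Fin n)} {a : Fin n} (ha : a ∈ B) : rotP B a ∈ B := by
  rw [← mem_lDesc]
  exact List.formPerm_apply_mem_of_mem (mem_lDesc.2 ha)

lemma rot_pow_getElem {B : Finset (Fin n)} (t i : ℕ) (h : i < (lDesc B).length)
    (h2 : (i + t) % (lDesc B).length < (lDesc B).length) :
    ((rotP B) ^ t) ((lDesc B)[i]) = (lDesc B)[(i + t) % (lDesc B).length]'h2 := by
  exact List.formPerm_pow_apply_getElem _ (nodup_lDesc B) t i h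

lemma getElem_idx_congr {α : Type*} {l : List α} {i i' : ℕ} (h : i = i') (hi : i < l.length) :
    l[i] = l[i']'(h ▸ hi) := by subst h; rfl

lemma rot_min {B : Finset (Fin n)} (hB : B.Nonempty) :
    rotP B (B.min' hB) = B.max' hB := by
  have hc := Finset.card_pos.2 hB
  have hlen : (lDesc B).length = B.card := length_lDesc B
  have h1 : B.card - 1 < (lDesc B).length := by omega
  have h2 := rot_pow_getElem (B := B) 1 (B.card - 1) h1 (Nat.mod_lt _ (by omega))
  rw [ldesc_last hB, pow_one] at h2
  rw [h2]
  have hmod : (B.card - 1 + 1) % (lDesc B).length = 0 := by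
    rw [hlen, Nat.sub_add_cancel hc]
    exact Nat.mod_self _
  rw [getElem_idx_congr hmod]
  exact ldesc_zero hB

lemma rot_lt_iff {B : Finset (Fin n)} (hB : B.Nonempty) {a b : Fin n} (haB : a ∈ B) (hbB : b ∈ B)
    (ha : a ≠ B.min' hB) (hb : b ≠ B.min' hB) : rotP B a < rotP B b ↔ a < b := by
  have hc := Finset.card_pos.2 hB
  have hlen : (lDesc B).length = B.card := length_lDesc B
  obtain ⟨i, hi, hia⟩ := List.mem_iff_getElem.1 (mem_lDesc.2 haB)
  obtain ⟨j, hj, hjb⟩ := List.mem_iff_getElem.1 (mem_lDesc.2 hbB)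
  have hine : i ≠ B.card - 1 := by
    rintro rfl
    exact ha (by rw [← hia]; exact ldesc_last hB)
  have hjne : j ≠ B.card - 1 := by
    rintro rfl
    exact hb (by rw [← hjb]; exact ldesc_last hB)
  have hi1 : (i + 1) % (lDesc B).length = i + 1 := Nat.mod_eq_of_lt (by omega)
  have hj1 : (j + 1) % (lDesc B).length = j + 1 := Nat.mod_eq_of_lt (by omega)
  have hra := rot_pow_getElem (B := B) 1 i hi (Nat.mod_lt _ (by omega))
  rw [pow_one] at hra
  have hrb := rot_pow_getElem (B := B) 1 j hj (Nat.mod_lt _ (by omega))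
  rw [pow_one] at hrb
  rw [← hia, ← hjb, hra, hrb,
    ldesc_lt_iff (Nat.mod_lt _ (by omega)) (Nat.mod_lt _ (by omega)),
    ldesc_lt_iff hi hj]
  omega

lemma perm_maps_B {B : Finset (Fin n)} {σ : Equiv.Perm (Fin n)}
    (hfix : ∀ a, a ∉ B → σ a = a) : ∀ a ∈ B, σ a ∈ B := by
  intro a ha
  by_contra hc
  have h1 : σ (σ a) = σ a := hfix _ hc
  have h2 : σ a = a := σ.injective h1
  rw [h2] at hc
  exact hc ha

lemma perm_fix_inv {B : Finset (Fin n)} {σ : Equiv.Perm (Fin n)}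
    (hfix : ∀ a, a ∉ B → σ a = a) : ∀ a, a ∉ B → σ⁻¹ a = a := by
  intro a ha
  by_cases hc : σ⁻¹ a ∈ B
  · exfalso
    have : σ (σ⁻¹ a) = a := σ.apply_symm_apply a
    have h2 : σ (σ⁻¹ a) ∈ B := perm_maps_B hfix _ hc
    rw [this] at h2
    exact ha h2
  · have h1 : σ (σ⁻¹ a) = σ⁻¹ a := hfix _ hc
    rw [show σ (σ⁻¹ a) = a from σ.apply_symm_apply a] at h1
    exact h1.symm

lemma perm_fix_pow {B : Finset (Fin n)} {σ : Equiv.Perm (Fin n)}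
    (hfix : ∀ a, a ∉ B → σ a = a) (t : ℕ) : ∀ a, a ∉ B → (σ ^ t) a = a := by
  induction t with
  | zero => intro a _; simp
  | succ t ih =>
      intro a ha
      rw [pow_succ]
      simp only [Equiv.Perm.mul_apply]
      rw [hfix a ha, ih a ha]

lemma memE_iff {E B : Finset (Fin n)} {w : Equiv.Perm (Fin n)} (hB : E.image w = B)
    {v : Fin n} : v ∈ E ↔ w v ∈ B := by
  constructor
  · intro h; rw [← hB]; exact Finset.mem_image_of_mem _ h
  · intro h
    rw [← hB] at h
    obtain ⟨u, hu, he⟩ := Finset.mem_image.1 h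
    rwa [← w.injective he]

lemma single_step (hF : IsForest r) {E B : Finset (Fin n)}
    (hEc : ∀ u ∈ E, ∀ z, (strictR r u z ∨ strictR r z u) → z ∈ E)
    {w : Equiv.Perm (Fin n)} (hB : E.image w = B) (hBne : B.Nonempty) :
    majF r (rotP B * w) +
      (if (sUp r (w.symm (B.min' hBne))).Nonempty then 0 else hook r (w.symm (B.min' hBne))) =
    majF r w + 1 := by
  classical
  set mB := B.min' hBne with hmB
  set x := w.symm mB with hxdef
  have hwx : w x = mB := w.apply_symm_apply mB
  have hxE : x ∈ E := (memE_iff hB).2 (by rw [hwx]; exact B.min'_mem hBne)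
  have hpE : ∀ v ∈ E, (sUp r v).Nonempty → prnt r v ∈ E := by
    intro v hv h
    exact hEc v hv _ (Or.inl (prnt_mem h))
  have hpNE : ∀ v, v ∉ E → (sUp r v).Nonempty → prnt r v ∉ E := by
    intro v hv h hc
    exact hv (hEc _ hc v (Or.inr (prnt_mem h)))
  have hne_of_mem : ∀ v, v ∈ E → v ≠ x → w v ≠ mB := by
    intro v _ hvx hc
    exact hvx (by rw [hxdef, ← hc, w.symm_apply_apply])
  have hdes : des r (rotP B * w) =
      (des r w \ chl r x) ∪ (if (sUp r x).Nonempty then {x} else ∅) := by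
    ext v
    rw [Finset.mem_union, Finset.mem_sdiff, mem_des, mem_des]
    have hite : v ∈ (if (sUp r x).Nonempty then ({x} : Finset (Fin n)) else ∅) ↔
        ((sUp r x).Nonempty ∧ v = x) := by
      split_ifs with h
      · simp [h]
      · simp [h]
    rw [hite]
    by_cases hvx : v = x
    · have hvE : v ∈ E := by rw [hvx]; exact hxE
      have hwv : w v = mB := by rw [hvx]; exact hwx
      by_cases hne : (sUp r v).Nonempty
      · have hnex : (sUp r x).Nonempty := by rwa [hvx] at hne
        constructor
        · intro _
          exact Or.inr ⟨hnex, hvx⟩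
        · intro _
          refine ⟨hne, ?_⟩
          have hp : prnt r v ∈ E := hpE v hvE hne
          have hpB : w (prnt r v) ∈ B := (memE_iff hB).1 hp
          have hpx : prnt r v ≠ x := by
            rw [← hvx]; exact fun e => (prnt_mem hne).2 e.symm
          have hwp_ne : w (prnt r v) ≠ mB := hne_of_mem _ hp hpx
          simp only [Equiv.Perm.mul_apply]
          rw [hwv, rot_min hBne]
          have h1 : rotP B (w (prnt r v)) ∈ B := rot_mem hpB
          have h2 : rotP B (w (prnt r v)) ≠ B.max' hBne := by
            rw [← rot_min hBne]
            intro hc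
            exact hwp_ne ((rotP B).injective hc)
          exact lt_of_le_of_ne (B.le_max' _ h1) h2
      · have hnex : ¬ (sUp r x).Nonempty := by rwa [hvx] at hne
        simp [hne, hnex]
    · by_cases hne : (sUp r v).Nonempty
      · by_cases hvE : v ∈ E
        · have hp : prnt r v ∈ E := hpE v hvE hne
          have hpB : w (prnt r v) ∈ B := (memE_iff hB).1 hp
          have hvB : w v ∈ B := (memE_iff hB).1 hvE
          have hwv_ne : w v ≠ mB := hne_of_mem _ hvE hvx
          by_cases hpx : prnt r v = x
          · -- v is a child of x
            have hvchl : v ∈ chl r x := mem_chl.2 ⟨hne, hpx⟩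
            simp only [hne, true_and, hvchl, not_true, and_false, false_or,
              Equiv.Perm.mul_apply]
            constructor
            · intro hlt
              exfalso
              rw [hpx, hwx, rot_min hBne] at hlt
              have h1 : rotP B (w v) ∈ B := rot_mem hvB
              exact absurd hlt (not_lt.2 (B.le_max' _ h1))
            · rintro ⟨_, he⟩
              exact absurd he hvx
          · -- generic vertex of E
            have hvchl : v ∉ chl r x := fun hc => hpx (mem_chl.1 hc).2
            have hwp_ne : w (prnt r v) ≠ mB := hne_of_mem _ hp hpx
            simp only [hne, true_and, hvchl, not_false_iff, and_true, Equiv.Perm.mul_apply]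
            rw [rot_lt_iff hBne hpB hvB hwp_ne hwv_ne]
            constructor
            · intro h; left; exact h
            · rintro (h | ⟨_, he⟩)
              · exact h
              · exact absurd he hvx
        · -- v outside E
          have hp : prnt r v ∉ E := hpNE v hvE hne
          have hvB : w v ∉ B := fun hc => hvE ((memE_iff hB).2 hc)
          have hpB : w (prnt r v) ∉ B := fun hc => hp ((memE_iff hB).2 hc)
          have hvchl : v ∉ chl r x := by
            intro hc
            exact hvE (hEc x hxE v (Or.inr (chl_mem_strict hF hc)))
          simp only [hne, true_and, hvchl, not_false_iff, and_true, Equiv.Perm.mul_apply,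
            rot_fix hvB, rot_fix hpB]
          constructor
          · intro h; left; exact h
          · rintro (h | ⟨_, he⟩)
            · exact h
            · exact absurd he hvx
      · simp [hne, hvx]
  have hchl_des : chl r x ⊆ des r w := by
    intro v hv
    rcases mem_chl.1 hv with ⟨hne, hpx⟩
    have hsvx : strictR r v x := chl_mem_strict hF hv
    have hvE : v ∈ E := hEc x hxE v (Or.inr hsvx)
    refine mem_des.2 ⟨hne, ?_⟩
    rw [hpx, hwx]
    have hvB : w v ∈ B := (memE_iff hB).1 hvE
    have hwv_ne : w v ≠ mB := hne_of_mem _ hvE hsvx.2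
    exact lt_of_le_of_ne (B.min'_le _ hvB) (Ne.symm hwv_ne)
  have hxnot : x ∉ des r w \ chl r x := by
    intro hmem
    rcases mem_des.1 (Finset.mem_sdiff.1 hmem).1 with ⟨hne, hlt⟩
    have hp : prnt r x ∈ E := hpE x hxE hne
    have hpB : w (prnt r x) ∈ B := (memE_iff hB).1 hp
    rw [hwx] at hlt
    exact absurd hlt (not_lt.2 (B.min'_le _ hpB))
  have hdisj : Disjoint (des r w \ chl r x)
      (if (sUp r x).Nonempty then ({x} : Finset (Fin n)) else ∅) := by
    split_ifs
    · rw [Finset.disjoint_singleton_right]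
      exact hxnot
    · exact Finset.disjoint_empty_right _
  rw [majF_eq_sum_des, majF_eq_sum_des, hdes, Finset.sum_union hdisj]
  have hsplit : (∑ v ∈ des r w \ chl r x, hook r v) + (∑ v ∈ chl r x, hook r v) =
      ∑ v ∈ des r w, hook r v := Finset.sum_sdiff hchl_des
  have hhk := sum_hook_chl hF x
  by_cases hroot : (sUp r x).Nonempty
  · rw [if_pos hroot, if_pos hroot, Finset.sum_singleton]
    omega
  · rw [if_neg hroot, if_neg hroot, Finset.sum_empty]
    omega

lemma image_rot_pow {E B : Finset (Fin n)} {w : Equiv.Perm (Fin n)} (hB : E.image w = B)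
    (t : ℕ) : E.image ⇑(((rotP B) ^ t) * w) = B := by
  classical
  have hfix : ∀ a, a ∉ B → ((rotP B) ^ t) a = a := perm_fix_pow (fun a ha => rot_fix ha) t
  have hmaps := perm_maps_B hfix
  have h1 : E.image ⇑(((rotP B) ^ t) * w) = B.image ⇑((rotP B) ^ t) := by
    rw [← hB, Finset.image_image]
    rfl
  rw [h1]
  apply Finset.eq_of_subset_of_card_le
  · intro a ha
    obtain ⟨b, hb, rfl⟩ := Finset.mem_image.1 ha
    exact hmaps b hb
  · rw [Finset.card_image_of_injective _ (Equiv.injective _)]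

lemma rot_iter (hF : IsForest r) {E B : Finset (Fin n)}
    (hEc : ∀ u ∈ E, ∀ z, (strictR r u z ∨ strictR r z u) → z ∈ E)
    {w : Equiv.Perm (Fin n)} (hB : E.image w = B) :
    ∀ t, t ≤ B.card →
      majF r ((rotP B) ^ t * w) +
        ∑ u ∈ E.filter (fun u => ¬ (sUp r u).Nonempty ∧ w u ∈ (lAsc B).take t), hook r u
      = majF r w + t := by
  intro t
  induction t with
  | zero =>
      intro _
      simp
  | succ t ih =>
      intro ht
      have ht' : t ≤ B.card := by omega
      have hlen : (lAsc B).length = B.card := length_lAsc B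
      have htlen : t < (lAsc B).length := by omega
      have hdl : (lDesc B).length = B.card := length_lDesc B
      set a := (lAsc B)[t]'htlen with ha
      have hBne : B.Nonempty := Finset.card_pos.1 (by omega)
      set w1 := (rotP B) ^ t * w with hw1
      have hB1 : E.image ⇑w1 = B := image_rot_pow hB t
      have hstep := single_step hF hEc hB1 hBne
      have hkey : w1.symm (B.min' hBne) = w.symm a := by
        rw [Equiv.symm_apply_eq, hw1]
        simp only [Equiv.Perm.mul_apply, Equiv.apply_symm_apply]
        have h1 : B.card - 1 - t < (lDesc B).length := by omega
        have h2 : (lDesc B)[B.card - 1 - t]'h1 = a := by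
          rw [ldesc_eq_lasc h1]
          exact (getElem_idx_congr (by rw [length_lAsc]; omega) (by rw [length_lAsc]; omega)).symm
        have hmodlt : (B.card - 1 - t + t) % (lDesc B).length < (lDesc B).length :=
          Nat.mod_lt _ (by omega)
        have h3 := rot_pow_getElem (B := B) t (B.card - 1 - t) h1 hmodlt
        have hmod : (B.card - 1 - t + t) % (lDesc B).length = B.card - 1 := by
          have he : B.card - 1 - t + t = B.card - 1 := by omega
          rw [he, Nat.mod_eq_of_lt (by omega)]
        rw [← h2, h3, getElem_idx_congr hmod hmodlt]
        exact (ldesc_last hBne).symm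
      have haB : a ∈ B := mem_lAsc.1 (List.getElem_mem htlen)
      have hxE2 : w.symm a ∈ E := (memE_iff hB).2 (by rw [Equiv.apply_symm_apply]; exact haB)
      have hanotin : a ∉ (lAsc B).take t := by
        intro hmem
        obtain ⟨i, hi, hieq⟩ := List.mem_iff_getElem.1 hmem
        rw [List.getElem_take] at hieq
        rw [ha] at hieq
        have hit : i = t := ((nodup_lAsc B).getElem_inj_iff).1 hieq
        rw [List.length_take] at hi
        omega
      have hset : E.filter (fun u => ¬ (sUp r u).Nonempty ∧ w u ∈ (lAsc B).take (t + 1)) =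
          E.filter (fun u => ¬ (sUp r u).Nonempty ∧ w u ∈ (lAsc B).take t) ∪
            (if (sUp r (w.symm a)).Nonempty then ∅ else {w.symm a}) := by
        ext u
        rw [Finset.mem_union, Finset.mem_filter, Finset.mem_filter]
        have htake : w u ∈ (lAsc B).take (t + 1) ↔ (w u ∈ (lAsc B).take t ∨ w u = a) := by
          rw [List.take_succ, List.mem_append, List.getElem?_eq_getElem htlen]
          simp [ha]
        constructor
        · rintro ⟨huE, hroot, hmem⟩
          rcases htake.1 hmem with h | h
          · exact Or.inl ⟨huE, hroot, h⟩
          · have hux : u = w.symm a := by rw [← h, Equiv.symm_apply_apply]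
            right
            rw [if_neg (by rw [← hux]; exact hroot)]
            simp [hux]
        · rintro (⟨huE, hroot, hmem⟩ | hx)
          · exact ⟨huE, hroot, htake.2 (Or.inl hmem)⟩
          · by_cases hcond : (sUp r (w.symm a)).Nonempty
            · rw [if_pos hcond] at hx
              simp at hx
            · rw [if_neg hcond, Finset.mem_singleton] at hx
              refine ⟨by rw [hx]; exact hxE2, by rw [hx]; exact hcond, ?_⟩
              exact htake.2 (Or.inr (by rw [hx, Equiv.apply_symm_apply]))
      have hdisj : Disjoint
          (E.filter (fun u => ¬ (sUp r u).Nonempty ∧ w u ∈ (lAsc B).take t))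
          (if (sUp r (w.symm a)).Nonempty then ∅ else ({w.symm a} : Finset (Fin n))) := by
        split_ifs
        · exact Finset.disjoint_empty_right _
        · rw [Finset.disjoint_singleton_right, Finset.mem_filter]
          rintro ⟨-, -, hmem⟩
          rw [Equiv.apply_symm_apply] at hmem
          exact hanotin hmem
      have hitesum : (∑ u ∈ (if (sUp r (w.symm a)).Nonempty then ∅
            else ({w.symm a} : Finset (Fin n))), hook r u) =
          (if (sUp r (w.symm a)).Nonempty then 0 else hook r (w.symm a)) := by
        split_ifs
        · simp
        · simp
      have hpow : rotP B * w1 = (rotP B) ^ (t + 1) * w := by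
        rw [hw1, ← mul_assoc, ← pow_succ']
      rw [hkey, hpow] at hstep
      have hih := ih ht'
      rw [hset, Finset.sum_union hdisj, hitesum]
      omega

lemma take_prefix_iff {B : Finset (Fin n)} (c : ℕ) {b : Fin n} :
    b ∈ (lAsc B).take ((B.filter (fun x : Fin n => ¬ c ≤ (x : ℕ))).card) ↔ b ∈ B ∧ ¬ c ≤ (b : ℕ) := by
  classical
  set t₀ := (B.filter (fun x : Fin n => ¬ c ≤ (x : ℕ))).card with ht₀
  have hts : (B.filter (fun x : Fin n => c ≤ (x : ℕ))).card + t₀ = B.card :=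
    Finset.card_filter_add_card_filter_not _
  have hlen : (lAsc B).length = B.card := length_lAsc B
  have ht₀le : t₀ ≤ B.card := by omega
  have hsub : ∀ x ∈ (lAsc B).take t₀, x ∈ B ∧ ¬ c ≤ (x : ℕ) := by
    intro x hx
    obtain ⟨i, hi, hieq⟩ := List.mem_iff_getElem.1 hx
    rw [List.length_take] at hi
    have hilen : i < (lAsc B).length := by omega
    rw [List.getElem_take] at hieq
    have hxB : x ∈ B := by rw [← hieq]; exact mem_lAsc.1 (List.getElem_mem hilen)
    refine ⟨hxB, ?_⟩
    intro hcx
    -- all later elements are ≥ c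
    have hinj : ∀ j, i ≤ j → (hj : j < (lAsc B).length) → c ≤ (((lAsc B)[j]'hj : Fin n) : ℕ) := by
      intro j hij hj
      rcases Nat.eq_or_lt_of_le hij with rfl | hij'
      · rw [hieq]; exact hcx
      · have := (lasc_lt_iff hilen hj).2 hij'
        have hle : ((lAsc B)[i]'hilen : ℕ) < (((lAsc B)[j]'hj : Fin n) : ℕ) := this
        rw [hieq] at hle
        omega
    have hcard : (Finset.Ico i (lAsc B).length).card ≤ (B.filter (fun x : Fin n => c ≤ (x : ℕ))).card := by
      apply Finset.card_le_card_of_injOn (f := fun j => (lAsc B).getD j b)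
      · intro j hj
        rw [Finset.coe_Ico, Set.mem_Ico] at hj
        simp only [Finset.mem_coe]
        rw [List.getD_eq_getElem _ _ hj.2]
        rw [Finset.mem_filter]
        exact ⟨mem_lAsc.1 (List.getElem_mem hj.2), hinj j hj.1 hj.2⟩
      · intro j hj j' hj' he
        rw [Finset.coe_Ico, Set.mem_Ico] at hj hj'
        simp only at he
        rw [List.getD_eq_getElem _ _ hj.2, List.getD_eq_getElem _ _ hj'.2] at he
        exact ((nodup_lAsc B).getElem_inj_iff).1 he
    rw [Nat.card_Ico] at hcard
    omega
  constructor
  · exact hsub b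
  · rintro ⟨hbB, hbc⟩
    -- cardinality argument
    have hnodup : ((lAsc B).take t₀).Nodup := (List.take_sublist _ _).nodup (nodup_lAsc B)
    have hlentake : ((lAsc B).take t₀).length = t₀ := by
      rw [List.length_take]; omega
    have hsubF : ((lAsc B).take t₀).toFinset ⊆ B.filter (fun x : Fin n => ¬ c ≤ (x : ℕ)) := by
      intro x hx
      rw [List.mem_toFinset] at hx
      rw [Finset.mem_filter]
      exact hsub x hx
    have hcards : ((lAsc B).take t₀).toFinset.card = t₀ := by
      rw [List.toFinset_card_of_nodup hnodup, hlentake]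
    have heq : ((lAsc B).take t₀).toFinset = B.filter (fun x : Fin n => ¬ c ≤ (x : ℕ)) := by
      apply Finset.eq_of_subset_of_card_le hsubF
      rw [hcards]
    rw [← List.mem_toFinset, heq, Finset.mem_filter]
    exact ⟨hbB, hbc⟩

lemma rot_sum (hF : IsForest r) {E B : Finset (Fin n)}
    (hEc : ∀ u ∈ E, ∀ z, (strictR r u z ∨ strictR r z u) → z ∈ E)
    {R : Type*} [CommRing R] (q : R) (W : Finset (Equiv.Perm (Fin n)))
    (hBW : ∀ w ∈ W, E.image ⇑w = B)
    (hW : ∀ σ : Equiv.Perm (Fin n), (∀ a, a ∉ B → σ a = a) → ∀ w ∈ W, σ * w ∈ W) (c : ℕ) :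
    ∑ w ∈ W, q ^ (majF r w +
        ∑ u ∈ E.filter (fun u => ¬ (sUp r u).Nonempty ∧ c ≤ ((w u : Fin n) : ℕ)), hook r u)
      = q ^ ((B.filter (fun b : Fin n => c ≤ (b : ℕ))).card) * ∑ w ∈ W, q ^ majF r w := by
  classical
  rcases W.eq_empty_or_nonempty with rfl | ⟨w₀, hw₀⟩
  · simp
  have hBE : B.card = E.card := by
    rw [← hBW w₀ hw₀, Finset.card_image_of_injective _ (Equiv.injective _)]
  set t₀ := (B.filter (fun x : Fin n => ¬ c ≤ (x : ℕ))).card with ht₀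
  set s := (B.filter (fun x : Fin n => c ≤ (x : ℕ))).card with hs
  have hts : s + t₀ = B.card := Finset.card_filter_add_card_filter_not _
  have ht₀le : t₀ ≤ B.card := by omega
  have hfixt : ∀ a, a ∉ B → ((rotP B) ^ t₀) a = a := perm_fix_pow (fun a ha => rot_fix ha) t₀
  have hpt : ∀ w ∈ W, majF r ((rotP B) ^ t₀ * w) + s =
      majF r w +
        ∑ u ∈ E.filter (fun u => ¬ (sUp r u).Nonempty ∧ c ≤ ((w u : Fin n) : ℕ)), hook r u := by
    intro w hw
    have hB := hBW w hw
    have hIT := rot_iter hF hEc hB t₀ ht₀le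
    have hsm : E.filter (fun u => ¬ (sUp r u).Nonempty ∧ w u ∈ (lAsc B).take t₀)
        = E.filter (fun u => ¬ (sUp r u).Nonempty ∧ ¬ c ≤ ((w u : Fin n) : ℕ)) := by
      apply Finset.filter_congr
      intro u hu
      have hwuB : w u ∈ B := (memE_iff hB).1 hu
      rw [take_prefix_iff]
      simp [hwuB]
    rw [hsm] at hIT
    have hsum : (∑ u ∈ E.filter (fun u => ¬ (sUp r u).Nonempty ∧ ¬ c ≤ ((w u : Fin n) : ℕ)),
          hook r u)
        + (∑ u ∈ E.filter (fun u => ¬ (sUp r u).Nonempty ∧ c ≤ ((w u : Fin n) : ℕ)), hook r u)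
        = E.card := by
      rw [← sum_hook_roots hF E hEc]
      rw [← Finset.sum_filter_add_sum_filter_not
        (E.filter (fun u => ¬ (sUp r u).Nonempty)) (fun u => c ≤ ((w u : Fin n) : ℕ)) (hook r)]
      rw [Finset.filter_filter, Finset.filter_filter]
      ring
    omega
  have hreindex : ∑ w ∈ W, q ^ (majF r ((rotP B) ^ t₀ * w)) = ∑ w ∈ W, q ^ majF r w := by
    apply Finset.sum_nbij' (i := fun w => (rotP B) ^ t₀ * w)
      (j := fun w => ((rotP B) ^ t₀)⁻¹ * w)
    · intro w hw
      exact hW _ hfixt w hw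
    · intro w hw
      exact hW _ (perm_fix_inv hfixt) w hw
    · intro w _
      rw [← mul_assoc, inv_mul_cancel, one_mul]
    · intro w _
      rw [← mul_assoc, mul_inv_cancel, one_mul]
    · intro w _
      rfl
  calc ∑ w ∈ W, q ^ (majF r w +
        ∑ u ∈ E.filter (fun u => ¬ (sUp r u).Nonempty ∧ c ≤ ((w u : Fin n) : ℕ)), hook r u)
      = ∑ w ∈ W, q ^ (majF r ((rotP B) ^ t₀ * w) + s) := by
        apply Finset.sum_congr rfl
        intro w hw
        rw [hpt w hw]
    _ = ∑ w ∈ W, q ^ (majF r ((rotP B) ^ t₀ * w)) * q ^ s := by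
        apply Finset.sum_congr rfl
        intro w _
        rw [pow_add]
    _ = (∑ w ∈ W, q ^ (majF r ((rotP B) ^ t₀ * w))) * q ^ s := by rw [← Finset.sum_mul]
    _ = (∑ w ∈ W, q ^ majF r w) * q ^ s := by rw [hreindex]
    _ = q ^ s * ∑ w ∈ W, q ^ majF r w := mul_comm _ _

lemma image_fix_eq {B : Finset (Fin n)} {σ : Equiv.Perm (Fin n)}
    (hfix : ∀ a, a ∉ B → σ a = a) : B.image ⇑σ = B := by
  classical
  apply Finset.eq_of_subset_of_card_le
  · intro a ha
    obtain ⟨b, hb, rfl⟩ := Finset.mem_image.1 ha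
    exact perm_maps_B hfix b hb
  · rw [Finset.card_image_of_injective _ (Equiv.injective _)]

end SecB

section Comp

variable {m : ℕ} {r : Fin m → Fin m → Prop}

/-- the component of `z`. -/
def cmpF (r : Fin m → Fin m → Prop) (z : Fin m) : Finset (Fin m) :=
  univ.filter fun u => rootOf r u = rootOf r z

/-- the component label data of a labeling. -/
def compLabelF (r : Fin m → Fin m → Prop) (w : Equiv.Perm (Fin m)) : Fin m → Finset (Fin m) :=
  fun z => (cmpF r z).image ⇑w

lemma mem_cmpF {z u : Fin m} : u ∈ cmpF r z ↔ rootOf r u = rootOf r z := by simp [cmpF]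

lemma self_mem_cmpF {z : Fin m} : z ∈ cmpF r z := mem_cmpF.2 rfl

end Comp

section SecC

variable {N : ℕ} {r : Fin (N + 1) → Fin (N + 1) → Prop}

lemma prnt_eq {m : ℕ} {r₀ : Fin m → Fin m → Prop} {v p : Fin m} (hp : p ∈ sUp r₀ v)
    (hmin : ∀ u ∈ sUp r₀ v, p ≤ u) : prnt r₀ v = p := by
  have hne : (sUp r₀ v).Nonempty := ⟨p, hp⟩
  exact le_antisymm (prnt_min hne hp) (hmin _ (mem_sUp.2 (prnt_mem hne)))

/-- restriction of the forest to the first `N` indices. -/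
def rRes (r : Fin (N + 1) → Fin (N + 1) → Prop) : Fin N → Fin N → Prop :=
  fun u v => r u.castSucc v.castSucc

/-- the insertion of the root label `j`. -/
def insP (j : Fin (N + 1)) (w' : Equiv.Perm (Fin N)) : Equiv.Perm (Fin (N + 1)) :=
  finSuccEquivLast.trans ((w'.optionCongr).trans (finSuccEquiv' j).symm)

/-- the strict down-set of the top vertex. -/
def EE (r : Fin (N + 1) → Fin (N + 1) → Prop) : Finset (Fin N) :=
  univ.filter fun u => r u.castSucc (Fin.last N)

lemma mem_EE {u : Fin N} : u ∈ EE r ↔ r u.castSucc (Fin.last N) := by simp [EE]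

@[simp] lemma insP_castSucc (j : Fin (N + 1)) (w' : Equiv.Perm (Fin N)) (v : Fin N) :
    insP j w' v.castSucc = j.succAbove (w' v) := by simp [insP]

@[simp] lemma insP_last (j : Fin (N + 1)) (w' : Equiv.Perm (Fin N)) :
    insP j w' (Fin.last N) = j := by simp [insP]

lemma forest_res (hF : IsForest r) : IsForest (rRes r) := by
  refine ⟨?_, ?_, ?_⟩
  · exact { refl := fun a => fr_refl hF _,
            trans := fun a b c h1 h2 => fr_trans hF h1 h2,
            antisymm := fun a b h1 h2 => Fin.castSucc_injective _ (fr_antisymm hF h1 h2) }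
  · intro v u u' h1 h2
    exact hF.2.1 _ _ _ h1 h2
  · intro u v h
    have := fr_nat hF h
    exact Fin.castSucc_le_castSucc_iff.1 this

lemma sUp_last (hF : IsForest r) : sUp r (Fin.last N) = ∅ := by
  ext z
  simp only [mem_sUp, Finset.notMem_empty, iff_false]
  rintro ⟨h1, h2⟩
  exact h2 (le_antisymm (fr_nat hF h1) (Fin.le_last z))

lemma strictR_res_iff {u v : Fin N} :
    strictR (rRes r) u v ↔ strictR r u.castSucc v.castSucc := by
  unfold strictR rRes
  constructor
  · rintro ⟨h1, h2⟩
    exact ⟨h1, fun e => h2 (Fin.castSucc_injective _ e)⟩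
  · rintro ⟨h1, h2⟩
    exact ⟨h1, fun e => h2 (by rw [e])⟩

lemma sUp_res (hF : IsForest r) (v : Fin N) :
    sUp r v.castSucc =
      (sUp (rRes r) v).image Fin.castSucc ∪
        (if v ∈ EE r then {Fin.last N} else ∅) := by
  ext z
  rw [Finset.mem_union, mem_sUp]
  induction z using Fin.lastCases with
  | last =>
      have h1 : Fin.last N ∉ (sUp (rRes r) v).image Fin.castSucc := by
        intro hmem
        obtain ⟨y, -, e⟩ := Finset.mem_image.1 hmem
        exact (Fin.castSucc_lt_last y).ne e
      have h2 : (Fin.last N ∈ if v ∈ EE r then ({Fin.last N} : Finset (Fin (N+1))) else ∅)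
          ↔ v ∈ EE r := by
        split_ifs with h
        · simp [h]
        · simp [h]
      constructor
      · rintro ⟨hr, _⟩
        exact Or.inr (h2.2 (mem_EE.2 hr))
      · rintro (h | h)
        · exact absurd h h1
        · exact ⟨mem_EE.1 (h2.1 h), (Fin.castSucc_lt_last v).ne⟩
  | cast y =>
      have h2 : (y.castSucc ∈ if v ∈ EE r then ({Fin.last N} : Finset (Fin (N+1))) else ∅)
          ↔ False := by
        split_ifs with h
        · simp only [Finset.mem_singleton, iff_false]
          exact (Fin.castSucc_lt_last y).ne
        · simp
      rw [h2]
      simp only [or_false]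
      constructor
      · intro h
        exact Finset.mem_image_of_mem _ (mem_sUp.2 (strictR_res_iff.2 h))
      · intro h
        obtain ⟨y', hy', he⟩ := Finset.mem_image.1 h
        have : y' = y := Fin.castSucc_injective _ he
        subst this
        exact strictR_res_iff.1 (mem_sUp.1 hy')

lemma hook_res (hF : IsForest r) (v : Fin N) : hook (rRes r) v = hook r v.castSucc := by
  unfold hook
  have himg : (univ.filter fun u => r u v.castSucc) =
      (univ.filter fun u => rRes r u v).image Fin.castSucc := by
    ext z
    induction z using Fin.lastCases with
    | last =>
        simp only [Finset.mem_filter, Finset.mem_univ, true_and, Finset.mem_image]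
        constructor
        · intro h
          have := fr_nat hF h
          exact absurd this (not_le.2 (Fin.castSucc_lt_last v))
        · rintro ⟨y, _, he⟩
          exact absurd he (Fin.castSucc_lt_last y).ne
    | cast y =>
        simp only [Finset.mem_filter, Finset.mem_univ, true_and, Finset.mem_image]
        constructor
        · intro h
          exact ⟨y, h, rfl⟩
        · rintro ⟨y', hy', he⟩
          have : y' = y := Fin.castSucc_injective _ he
          subst this
          exact hy'
  rw [himg, Finset.card_image_of_injective _ (Fin.castSucc_injective _)]

/-- case (a): non-roots of the restricted forest keep their parent. -/
lemma prnt_res_a (hF : IsForest r) {v : Fin N} (hne : (sUp (rRes r) v).Nonempty) :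
    (sUp r v.castSucc).Nonempty ∧ prnt r v.castSucc = (prnt (rRes r) v).castSucc := by
  have hp' := prnt_mem (r := rRes r) hne
  have hpmem : (prnt (rRes r) v).castSucc ∈ sUp r v.castSucc :=
    mem_sUp.2 (strictR_res_iff.1 hp')
  refine ⟨⟨_, hpmem⟩, ?_⟩
  apply prnt_eq hpmem
  intro u hu
  rw [sUp_res hF] at hu
  rcases Finset.mem_union.1 hu with h | h
  · obtain ⟨y, hy, rfl⟩ := Finset.mem_image.1 h
    rw [Fin.castSucc_le_castSucc_iff]
    exact prnt_min hne hy
  · have : u = Fin.last N := by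
      by_cases hv : v ∈ EE r
      · rw [if_pos hv] at h; exact Finset.mem_singleton.1 h
      · rw [if_neg hv] at h; exact absurd h (Finset.notMem_empty u)
    rw [this]
    exact Fin.le_last _
lemma prnt_res_b1 (hF : IsForest r) {v : Fin N} (hne : ¬ (sUp (rRes r) v).Nonempty)
    (hv : v ∈ EE r) :
    (sUp r v.castSucc).Nonempty ∧ prnt r v.castSucc = Fin.last N := by
  have hmem : Fin.last N ∈ sUp r v.castSucc := by
    rw [sUp_res hF, Finset.mem_union, if_pos hv]
    exact Or.inr (Finset.mem_singleton_self _)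
  refine ⟨⟨_, hmem⟩, ?_⟩
  apply prnt_eq hmem
  intro u hu
  rw [sUp_res hF, Finset.mem_union, if_pos hv] at hu
  rcases hu with h | h
  · obtain ⟨y, hy, rfl⟩ := Finset.mem_image.1 h
    exact absurd ⟨y, hy⟩ hne
  · rw [Finset.mem_singleton.1 h]

lemma prnt_res_b2 (hF : IsForest r) {v : Fin N} (hne : ¬ (sUp (rRes r) v).Nonempty)
    (hv : v ∉ EE r) : sUp r v.castSucc = ∅ := by
  rw [sUp_res hF, if_neg hv]
  rw [Finset.not_nonempty_iff_eq_empty.1 hne]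
  simp

lemma succAbove_val (j : Fin (N + 1)) (a : Fin N) :
    ((j.succAbove a : Fin (N + 1)) : ℕ) =
      if (a : ℕ) < (j : ℕ) then (a : ℕ) else (a : ℕ) + 1 := by
  rcases lt_or_ge (a.castSucc) j with h | h
  · rw [Fin.succAbove_of_castSucc_lt _ _ h, if_pos]
    · rfl
    · exact h
  · rw [Fin.succAbove_of_le_castSucc _ _ h, if_neg]
    · rfl
    · have : (j : ℕ) ≤ (a : ℕ) := h
      omega

lemma lt_succAbove_iff' (j : Fin (N + 1)) (a : Fin N) :
    j < j.succAbove a ↔ (j : ℕ) ≤ (a : ℕ) := by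
  rw [Fin.lt_def, succAbove_val]
  split_ifs with h
  · omega
  · omega

lemma mem_image_castSucc {X : Finset (Fin N)} {v : Fin N} :
    v.castSucc ∈ X.image Fin.castSucc ↔ v ∈ X := by
  constructor
  · intro h
    obtain ⟨y, hy, he⟩ := Finset.mem_image.1 h
    rwa [← Fin.castSucc_injective _ he]
  · exact fun h => Finset.mem_image_of_mem _ h

lemma des_insP (hF : IsForest r) (j : Fin (N + 1)) (w' : Equiv.Perm (Fin N)) :
    des r (insP j w') =
      ((des (rRes r) w') ∪ (EE r).filter
        (fun u => ¬ (sUp (rRes r) u).Nonempty ∧ (j : ℕ) ≤ ((w' u : Fin N) : ℕ))).image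
        Fin.castSucc := by
  ext z
  induction z using Fin.lastCases with
  | last =>
      constructor
      · intro h
        rcases mem_des.1 h with ⟨hne, -⟩
        rw [sUp_last hF] at hne
        exact absurd hne (by simp)
      · intro h
        obtain ⟨y, -, e⟩ := Finset.mem_image.1 h
        exact absurd e (Fin.castSucc_lt_last y).ne
  | cast v =>
      rw [mem_image_castSucc, Finset.mem_union, mem_des]
      by_cases hne : (sUp (rRes r) v).Nonempty
      · obtain ⟨hne2, hp⟩ := prnt_res_a hF hne
        constructor
        · rintro ⟨-, hlt⟩
          left
          refine mem_des.2 ⟨hne, ?_⟩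
          rw [hp, insP_castSucc, insP_castSucc] at hlt
          exact (Fin.succAbove_lt_succAbove_iff).1 hlt
        · rintro (h | h)
          · rcases mem_des.1 h with ⟨-, hlt⟩
            refine ⟨hne2, ?_⟩
            rw [hp, insP_castSucc, insP_castSucc]
            exact Fin.succAbove_lt_succAbove_iff.2 hlt
          · rcases Finset.mem_filter.1 h with ⟨-, hroot, -⟩
            exact absurd hne hroot
      · by_cases hvE : v ∈ EE r
        · obtain ⟨hne2, hp⟩ := prnt_res_b1 hF hne hvE
          constructor
          · rintro ⟨-, hlt⟩
            right
            rw [hp, insP_last, insP_castSucc] at hlt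
            exact Finset.mem_filter.2 ⟨hvE, hne, (lt_succAbove_iff' j (w' v)).1 hlt⟩
          · rintro (h | h)
            · exact absurd (mem_des.1 h).1 hne
            · rcases Finset.mem_filter.1 h with ⟨-, -, hj⟩
              refine ⟨hne2, ?_⟩
              rw [hp, insP_last, insP_castSucc]
              exact (lt_succAbove_iff' j (w' v)).2 hj
        · have hempty := prnt_res_b2 hF hne hvE
          constructor
          · rintro ⟨hne2, -⟩
            rw [hempty] at hne2
            exact absurd hne2 (by simp)
          · rintro (h | h)
            · exact absurd (mem_des.1 h).1 hne
            · exact absurd (Finset.mem_filter.1 h).1 hvE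

lemma maj_insP (hF : IsForest r) (j : Fin (N + 1)) (w' : Equiv.Perm (Fin N)) :
    majF r (insP j w') = majF (rRes r) w' +
      ∑ u ∈ (EE r).filter
          (fun u => ¬ (sUp (rRes r) u).Nonempty ∧ (j : ℕ) ≤ ((w' u : Fin N) : ℕ)),
        hook (rRes r) u := by
  rw [majF_eq_sum_des, des_insP hF j w',
    Finset.sum_image (by intro a _ b _ e; exact Fin.castSucc_injective _ e)]
  have hdisj : Disjoint (des (rRes r) w')
      ((EE r).filter
        (fun u => ¬ (sUp (rRes r) u).Nonempty ∧ (j : ℕ) ≤ ((w' u : Fin N) : ℕ))) := by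
    rw [Finset.disjoint_left]
    intro a ha hb
    exact (Finset.mem_filter.1 hb).2.1 (mem_des.1 ha).1
  rw [Finset.sum_union hdisj, majF_eq_sum_des]
  congr 1
  · apply Finset.sum_congr rfl
    intro u _
    exact (hook_res hF u).symm
  · apply Finset.sum_congr rfl
    intro u _
    exact (hook_res hF u).symm

lemma inv_insP (hF : IsForest r) (j : Fin (N + 1)) (w' : Equiv.Perm (Fin N)) :
    invF r (insP j w') = invF (rRes r) w' +
      ((EE r).filter (fun u => (j : ℕ) ≤ ((w' u : Fin N) : ℕ))).card := by
  classical
  unfold invF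
  set w := insP j w' with hw
  set S := univ.filter
    (fun uv : Fin (N + 1) × Fin (N + 1) => strictR r uv.1 uv.2 ∧ w uv.2 < w uv.1) with hS
  have hsplit := Finset.card_filter_add_card_filter_not
    (s := S) (p := fun uv => uv.2 = Fin.last N)
  have hno_last_left : ∀ uv : Fin (N + 1) × Fin (N + 1), uv ∈ S → uv.1 ≠ Fin.last N := by
    intro uv huv he
    rcases (Finset.mem_filter.1 huv).2 with ⟨⟨h1, h2⟩, -⟩
    rw [he] at h1 h2
    exact h2 (le_antisymm (fr_nat hF h1) (Fin.le_last _))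
  have h1 : S.filter (fun uv => uv.2 = Fin.last N) =
      ((EE r).filter (fun u => (j : ℕ) ≤ ((w' u : Fin N) : ℕ))).image
        (fun z => (z.castSucc, Fin.last N)) := by
    ext uv
    constructor
    · intro h
      rcases Finset.mem_filter.1 h with ⟨hmem, h2⟩
      rcases (Finset.mem_filter.1 hmem).2 with ⟨hstr, hlt⟩
      have h1ne : uv.1 ≠ Fin.last N := hno_last_left uv hmem
      set z := uv.1.castPred h1ne with hz
      have hz1 : uv.1 = z.castSucc := (Fin.castSucc_castPred uv.1 h1ne).symm
      refine Finset.mem_image.2 ⟨z, ?_, ?_⟩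
      · rw [Finset.mem_filter]
        constructor
        · rw [mem_EE, ← hz1, ← h2]
          exact hstr.1
        · rw [h2, insP_last] at hlt
          rw [hz1, insP_castSucc] at hlt
          exact (lt_succAbove_iff' j (w' z)).1 hlt
      · rw [← hz1, ← h2]
    · intro h
      obtain ⟨z, hz, he⟩ := Finset.mem_image.1 h
      rcases Finset.mem_filter.1 hz with ⟨hzE, hzj⟩
      rw [← he]
      refine Finset.mem_filter.2 ⟨?_, rfl⟩
      refine Finset.mem_filter.2 ⟨Finset.mem_univ _, ?_, ?_⟩
      · exact ⟨mem_EE.1 hzE, (Fin.castSucc_lt_last z).ne⟩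
      · rw [insP_last, insP_castSucc]
        exact (lt_succAbove_iff' j (w' z)).2 hzj
  have h2 : S.filter (fun uv => ¬ uv.2 = Fin.last N) =
      (univ.filter (fun uv : Fin N × Fin N =>
          strictR (rRes r) uv.1 uv.2 ∧ w' uv.2 < w' uv.1)).image
        (fun uv => (uv.1.castSucc, uv.2.castSucc)) := by
    ext uv
    constructor
    · intro h
      rcases Finset.mem_filter.1 h with ⟨hmem, h2⟩
      rcases (Finset.mem_filter.1 hmem).2 with ⟨hstr, hlt⟩
      have h1ne : uv.1 ≠ Fin.last N := hno_last_left uv hmem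
      set z1 := uv.1.castPred h1ne with hz1d
      have hz1 : uv.1 = z1.castSucc := (Fin.castSucc_castPred uv.1 h1ne).symm
      set z2 := uv.2.castPred h2 with hz2d
      have hz2 : uv.2 = z2.castSucc := (Fin.castSucc_castPred uv.2 h2).symm
      refine Finset.mem_image.2 ⟨(z1, z2), ?_, ?_⟩
      · refine Finset.mem_filter.2 ⟨Finset.mem_univ _, ?_, ?_⟩
        · rw [strictR_res_iff, ← hz1, ← hz2]
          exact hstr
        · rw [hz1, insP_castSucc, hz2, insP_castSucc] at hlt
          exact Fin.succAbove_lt_succAbove_iff.1 hlt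
      · rw [← hz1, ← hz2]
    · intro h
      obtain ⟨z, hz, he⟩ := Finset.mem_image.1 h
      rcases Finset.mem_filter.1 hz with ⟨-, hstr, hlt⟩
      rw [← he]
      refine Finset.mem_filter.2 ⟨?_, (Fin.castSucc_lt_last z.2).ne⟩
      refine Finset.mem_filter.2 ⟨Finset.mem_univ _, ?_, ?_⟩
      · exact strictR_res_iff.1 hstr
      · rw [insP_castSucc, insP_castSucc]
        exact Fin.succAbove_lt_succAbove_iff.2 hlt
  have hc1 : (S.filter (fun uv => uv.2 = Fin.last N)).card =
      ((EE r).filter (fun u => (j : ℕ) ≤ ((w' u : Fin N) : ℕ))).card := by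
    rw [h1, Finset.card_image_of_injective]
    intro a b he
    have := congrArg Prod.fst he
    exact Fin.castSucc_injective _ this
  have hc2 : (S.filter (fun uv => ¬ uv.2 = Fin.last N)).card =
      (univ.filter (fun uv : Fin N × Fin N =>
          strictR (rRes r) uv.1 uv.2 ∧ w' uv.2 < w' uv.1)).card := by
    rw [h2, Finset.card_image_of_injective]
    intro a b he
    have h1 := congrArg Prod.fst he
    have h2' := congrArg Prod.snd he
    simp only at h1 h2'
    ext
    · exact congrArg Fin.val (Fin.castSucc_injective _ h1)
    · exact congrArg Fin.val (Fin.castSucc_injective _ h2')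
  omega

lemma EE_closed (hF : IsForest r) :
    ∀ u ∈ EE r, ∀ z, (strictR (rRes r) u z ∨ strictR (rRes r) z u) → z ∈ EE r := by
  intro u hu z h
  rcases h with h | h
  · have h1 : r u.castSucc z.castSucc := h.1
    have h2 : r u.castSucc (Fin.last N) := mem_EE.1 hu
    rcases anc_comp hF h1 h2 with hc | hc
    · exact mem_EE.2 hc
    · have := fr_nat hF hc
      have h3 : z.castSucc = Fin.last N := le_antisymm (Fin.le_last _) this
      exact absurd h3 (Fin.castSucc_lt_last z).ne
  · exact mem_EE.2 (fr_trans hF h.1 (mem_EE.1 hu))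

lemma rootOf_last (hF : IsForest r) : rootOf r (Fin.last N) = Fin.last N :=
  root_unique hF (fr_refl hF _)
    (by rw [sUp_last hF]; exact fun h => Finset.not_nonempty_empty h)

lemma rootOf_E (hF : IsForest r) {v : Fin N} (hv : v ∈ EE r) :
    rootOf r v.castSucc = Fin.last N :=
  root_unique hF (mem_EE.1 hv)
    (by rw [sUp_last hF]; exact fun h => Finset.not_nonempty_empty h)

lemma EE_root_mem (hF : IsForest r) {u : Fin N} (hu : u ∈ EE r) :
    rootOf (rRes r) u ∈ EE r := by
  by_cases he : rootOf (rRes r) u = u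
  · rwa [he]
  · exact EE_closed hF u hu _ (Or.inl ⟨r_rootOf (forest_res hF) u, fun e => he e.symm⟩)

lemma EE_comp_closed (hF : IsForest r) :
    ∀ u ∈ EE r, ∀ z, rootOf (rRes r) z = rootOf (rRes r) u → z ∈ EE r := by
  intro u hu z hz
  have hroot : rootOf (rRes r) u ∈ EE r := EE_root_mem hF hu
  by_cases he : z = rootOf (rRes r) u
  · rwa [he]
  · refine EE_closed hF _ hroot z (Or.inr ⟨?_, he⟩)
    rw [← hz]
    exact r_rootOf (forest_res hF) z

lemma rootOf_notE (hF : IsForest r) {v : Fin N} (hv : v ∉ EE r) :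
    rootOf r v.castSucc = (rootOf (rRes r) v).castSucc := by
  apply root_unique hF
  · exact r_rootOf (forest_res hF) v
  · rintro ⟨z, hz⟩
    rw [mem_sUp] at hz
    induction z using Fin.lastCases with
    | last =>
        have hrE : rootOf (rRes r) v ∈ EE r := mem_EE.2 hz.1
        by_cases he : v = rootOf (rRes r) v
        · exact hv (by rwa [he])
        · exact hv (EE_closed hF _ hrE v
            (Or.inr ⟨r_rootOf (forest_res hF) v, he⟩))
    | cast y =>
        exact rootOf_isRoot (forest_res hF) v ⟨y, mem_sUp.2 (strictR_res_iff.2 hz)⟩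

lemma cmpF_last_comp (hF : IsForest r) :
    cmpF r (Fin.last N) = insert (Fin.last N) ((EE r).image Fin.castSucc) := by
  ext z
  rw [mem_cmpF, rootOf_last hF, Finset.mem_insert]
  induction z using Fin.lastCases with
  | last => simp [rootOf_last hF]
  | cast v =>
      have h1 : ¬ (v.castSucc = Fin.last N) := (Fin.castSucc_lt_last v).ne
      rw [mem_image_castSucc]
      constructor
      · intro h
        right
        by_contra hv
        rw [rootOf_notE hF hv] at h
        exact (Fin.castSucc_lt_last _).ne h
      · rintro (h | h)
        · exact absurd h h1
        · exact rootOf_E hF h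

lemma cmpF_E_comp (hF : IsForest r) {v : Fin N} (hv : v ∈ EE r) :
    cmpF r v.castSucc = cmpF r (Fin.last N) := by
  ext z
  rw [mem_cmpF, mem_cmpF, rootOf_E hF hv, rootOf_last hF]

lemma cmpF_notE_comp (hF : IsForest r) {v : Fin N} (hv : v ∉ EE r) :
    cmpF r v.castSucc = (cmpF (rRes r) v).image Fin.castSucc := by
  ext z
  rw [mem_cmpF, rootOf_notE hF hv]
  induction z using Fin.lastCases with
  | last =>
      constructor
      · intro h
        exact absurd (rootOf_last hF ▸ h : Fin.last N = _).symm (Fin.castSucc_lt_last _).ne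
      · intro h
        obtain ⟨y, -, e⟩ := Finset.mem_image.1 h
        exact absurd e (Fin.castSucc_lt_last y).ne
  | cast y =>
      rw [mem_image_castSucc, mem_cmpF]
      by_cases hy : y ∈ EE r
      · constructor
        · intro h
          rw [rootOf_E hF hy] at h
          exact absurd h.symm (Fin.castSucc_lt_last _).ne
        · intro h
          exact absurd (EE_comp_closed hF y hy v h.symm) hv
      · rw [rootOf_notE hF hy]
        constructor
        · intro h
          exact Fin.castSucc_injective _ h
        · intro h
          rw [h]

/-- coarse component data of a labeling of the restricted forest. -/
def crsP (r : Fin (N + 1) → Fin (N + 1) → Prop) (w' : Equiv.Perm (Fin N)) :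
    Finset (Fin N) × (Fin N → Finset (Fin N)) :=
  ((EE r).image ⇑w', fun v => if v ∈ EE r then ∅ else (cmpF (rRes r) v).image ⇑w')

lemma img_castSucc_insP (j : Fin (N + 1)) (w' : Equiv.Perm (Fin N)) (X : Finset (Fin N)) :
    (X.image Fin.castSucc).image ⇑(insP j w') = (X.image ⇑w').image (j.succAbove) := by
  rw [Finset.image_image, Finset.image_image]
  apply Finset.image_congr
  intro u _
  simp

lemma det_insP (hF : IsForest r) (j : Fin (N + 1)) {w₁ w₂ : Equiv.Perm (Fin N)}
    (h : crsP r w₁ = crsP r w₂) :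
    compLabelF r (insP j w₁) = compLabelF r (insP j w₂) := by
  have hfst : (EE r).image ⇑w₁ = (EE r).image ⇑w₂ := congrArg Prod.fst h
  have hsnd : ∀ v ∉ EE r, (cmpF (rRes r) v).image ⇑w₁ = (cmpF (rRes r) v).image ⇑w₂ := by
    intro v hv
    have h2 := congrFun (congrArg Prod.snd h) v
    simp only [crsP, if_neg hv] at h2
    exact h2
  have hlast : (cmpF r (Fin.last N)).image ⇑(insP j w₁) =
      (cmpF r (Fin.last N)).image ⇑(insP j w₂) := by
    rw [cmpF_last_comp hF, Finset.image_insert, Finset.image_insert,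
      img_castSucc_insP, img_castSucc_insP, insP_last, insP_last, hfst]
  funext z
  unfold compLabelF
  induction z using Fin.lastCases with
  | last => exact hlast
  | cast v =>
      by_cases hv : v ∈ EE r
      · rw [cmpF_E_comp hF hv]
        exact hlast
      · rw [cmpF_notE_comp hF hv, img_castSucc_insP, img_castSucc_insP, hsnd v hv]

lemma crs_of_compLabel (hF : IsForest r) {w₁ w₂ : Equiv.Perm (Fin N)}
    (h : compLabelF (rRes r) w₁ = compLabelF (rRes r) w₂) : crsP r w₁ = crsP r w₂ := by
  have hc : ∀ v, (cmpF (rRes r) v).image ⇑w₁ = (cmpF (rRes r) v).image ⇑w₂ :=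
    fun v => congrFun h v
  have hEb : EE r = (EE r).biUnion (fun v => cmpF (rRes r) v) := by
    ext u
    constructor
    · intro hu
      exact Finset.mem_biUnion.2 ⟨u, hu, self_mem_cmpF⟩
    · intro hu
      obtain ⟨v, hv, hu2⟩ := Finset.mem_biUnion.1 hu
      exact EE_comp_closed hF v hv u (mem_cmpF.1 hu2)
  unfold crsP
  refine Prod.ext ?_ ?_
  · show (EE r).image ⇑w₁ = (EE r).image ⇑w₂
    rw [hEb, Finset.biUnion_image, Finset.biUnion_image]
    apply Finset.biUnion_congr rfl
    intro v _
    exact hc v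
  · show (fun v => if v ∈ EE r then ∅ else (cmpF (rRes r) v).image ⇑w₁) = _
    funext v
    by_cases hv : v ∈ EE r
    · simp [hv]
    · simp only [if_neg hv]
      exact hc v

lemma crs_rot (hF : IsForest r) {σ : Equiv.Perm (Fin N)} {B : Finset (Fin N)}
    (hfix : ∀ a, a ∉ B → σ a = a) {w' : Equiv.Perm (Fin N)}
    (hB : (EE r).image ⇑w' = B) : crsP r (σ * w') = crsP r w' := by
  have himg : ∀ X : Finset (Fin N), X.image ⇑(σ * w') = (X.image ⇑w').image ⇑σ := by
    intro X
    rw [Finset.image_image]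
    rfl
  unfold crsP
  refine Prod.ext ?_ ?_
  · show (EE r).image ⇑(σ * w') = (EE r).image ⇑w'
    rw [himg, hB, image_fix_eq hfix]
  · funext v
    by_cases hv : v ∈ EE r
    · simp [hv]
    · simp only [if_neg hv]
      apply Finset.image_congr
      intro u hu
      show σ (w' u) = w' u
      apply hfix
      intro hmem
      rw [← hB] at hmem
      obtain ⟨e, he, hee⟩ := Finset.mem_image.1 hmem
      rw [w'.injective hee] at he
      exact hv (EE_comp_closed hF _ he v (by
        have := mem_cmpF.1 hu
        exact this.symm ▸ rfl))

end SecC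

section SecD

lemma maj_inv_zero (r : Fin 0 → Fin 0 → Prop) (w : Equiv.Perm (Fin 0)) :
    majF r w = invF r w := by
  have h1 : majF r w = 0 := by
    unfold majF
    apply Finset.sum_eq_zero
    intro v _
    exact absurd v.isLt (by omega)
  have h2 : invF r w = 0 := by
    unfold invF
    rw [Finset.card_eq_zero]
    ext uv
    simp only [Finset.mem_filter, Finset.notMem_empty, iff_false]
    rintro ⟨-, -⟩
    exact absurd uv.1.isLt (by omega)
  rw [h1, h2]

lemma insP_bij {N : ℕ} :
    Function.Bijective (fun p : Fin (N + 1) × Equiv.Perm (Fin N) => insP p.1 p.2) := by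
  rw [Fintype.bijective_iff_injective_and_card]
  constructor
  · rintro ⟨j₁, w₁⟩ ⟨j₂, w₂⟩ he
    simp only at he
    have hj : j₁ = j₂ := by
      have h1 := congrArg (fun e : Equiv.Perm (Fin (N + 1)) => e (Fin.last N)) he
      simpa using h1
    subst hj
    have hw : w₁ = w₂ := by
      ext v
      have h1 := congrArg (fun e : Equiv.Perm (Fin (N + 1)) => e v.castSucc) he
      simp only [insP_castSucc] at h1
      have := Fin.succAbove_right_injective (p := j₁) h1
      rw [this]
    rw [hw]
  · rw [Fintype.card_prod, Fintype.card_perm, Fintype.card_perm, Fintype.card_fin,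
      Fintype.card_fin, Nat.factorial_succ]

lemma equidist_filter {m : ℕ} {r : Fin m → Fin m → Prop} {R : Type*} [CommRing R] {q : R}
    (IH : ∀ C : Fin m → Finset (Fin m),
      ∑ w ∈ univ.filter (fun w => compLabelF r w = C), q ^ majF r w
        = ∑ w ∈ univ.filter (fun w => compLabelF r w = C), q ^ invF r w)
    (W : Finset (Equiv.Perm (Fin m))) (P : Equiv.Perm (Fin m) → Prop)
    (hWP : ∀ w, w ∈ W ↔ P w)
    (hP : ∀ w₁ w₂, compLabelF r w₁ = compLabelF r w₂ → (P w₁ ↔ P w₂)) :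
    ∑ w ∈ W, q ^ majF r w = ∑ w ∈ W, q ^ invF r w := by
  classical
  have hWeq : W = univ.filter P := by
    ext w
    simp [hWP w]
  rw [hWeq]
  have key : ∀ f : Equiv.Perm (Fin m) → R,
      ∑ w ∈ univ.filter P, f w =
        ∑ C : Fin m → Finset (Fin m),
          ∑ w ∈ univ.filter (fun w => compLabelF r w = C), (if P w then f w else 0) := by
    intro f
    rw [Finset.sum_filter]
    rw [← Finset.sum_fiberwise_of_maps_to (g := compLabelF r)
      (fun w _ => Finset.mem_univ _) (fun w => if P w then f w else 0)]
  rw [key, key]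
  apply Finset.sum_congr rfl
  intro C _
  by_cases hex : ∃ w₀ ∈ univ.filter (fun w => compLabelF r w = C), P w₀
  · obtain ⟨w₀, hw₀, hPw₀⟩ := hex
    have hall : ∀ w ∈ univ.filter (fun w => compLabelF r w = C), P w := by
      intro w hw
      refine (hP w w₀ ?_).2 hPw₀
      rw [(Finset.mem_filter.1 hw).2, (Finset.mem_filter.1 hw₀).2]
    calc ∑ w ∈ univ.filter (fun w => compLabelF r w = C), (if P w then q ^ majF r w else 0)
        = ∑ w ∈ univ.filter (fun w => compLabelF r w = C), q ^ majF r w := by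
          apply Finset.sum_congr rfl
          intro w hw
          rw [if_pos (hall w hw)]
      _ = ∑ w ∈ univ.filter (fun w => compLabelF r w = C), q ^ invF r w := IH C
      _ = ∑ w ∈ univ.filter (fun w => compLabelF r w = C), (if P w then q ^ invF r w else 0) := by
          apply Finset.sum_congr rfl
          intro w hw
          rw [if_pos (hall w hw)]
  · push_neg at hex
    calc ∑ w ∈ univ.filter (fun w => compLabelF r w = C), (if P w then q ^ majF r w else 0)
        = 0 := Finset.sum_eq_zero (fun w hw => if_neg (hex w hw))
      _ = ∑ w ∈ univ.filter (fun w => compLabelF r w = C), (if P w then q ^ invF r w else 0) :=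
          (Finset.sum_eq_zero (fun w hw => if_neg (hex w hw))).symm

theorem main_equidist {R : Type*} [CommRing R] (q : R) :
    ∀ (m : ℕ) (r : Fin m → Fin m → Prop), IsForest r →
      ∀ C : Fin m → Finset (Fin m),
        ∑ w ∈ univ.filter (fun w => compLabelF r w = C), q ^ majF r w
          = ∑ w ∈ univ.filter (fun w => compLabelF r w = C), q ^ invF r w := by
  intro m
  induction m with
  | zero =>
      intro r hF C
      apply Finset.sum_congr rfl
      intro w _
      rw [maj_inv_zero r w]
  | succ N ih =>
      intro r hF C
      have hF' := forest_res hF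
      have hEc' := EE_closed hF
      have hreidx : ∀ f : Equiv.Perm (Fin (N + 1)) → R,
          ∑ w : Equiv.Perm (Fin (N + 1)), f w =
            ∑ p : Fin (N + 1) × Equiv.Perm (Fin N), f (insP p.1 p.2) :=
        fun f => (Fintype.sum_bijective _ insP_bij _ f (fun p => rfl)).symm
      have htrans : ∀ f : Equiv.Perm (Fin (N + 1)) → R,
          ∑ w ∈ univ.filter (fun w => compLabelF r w = C), f w
            = ∑ j : Fin (N + 1),
                ∑ D : Finset (Fin N) × (Fin N → Finset (Fin N)),
                  ∑ w' ∈ univ.filter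
                    (fun w' => crsP r w' = D ∧ compLabelF r (insP j w') = C),
                    f (insP j w') := by
        intro f
        rw [Finset.sum_filter, hreidx (fun w => if compLabelF r w = C then f w else 0),
          Fintype.sum_prod_type]
        apply Finset.sum_congr rfl
        intro j _
        rw [← Finset.sum_fiberwise_of_maps_to (g := crsP r)
          (fun w' _ => Finset.mem_univ _)
          (fun w' => if compLabelF r (insP j w') = C then f (insP j w') else 0)]
        apply Finset.sum_congr rfl
        intro D _
        rw [← Finset.sum_filter, Finset.filter_filter]
      have hcore : ∀ (j : Fin (N + 1)) (D : Finset (Fin N) × (Fin N → Finset (Fin N))),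
          ∑ w' ∈ univ.filter (fun w' => crsP r w' = D ∧ compLabelF r (insP j w') = C),
            q ^ majF r (insP j w')
          = ∑ w' ∈ univ.filter (fun w' => crsP r w' = D ∧ compLabelF r (insP j w') = C),
            q ^ invF r (insP j w') := by
        intro j D
        set W := univ.filter
          (fun w' => crsP r w' = D ∧ compLabelF r (insP j w') = C) with hWdef
        have hBW : ∀ w' ∈ W, (EE r).image ⇑w' = D.1 := by
          intro w' hw'
          exact congrArg Prod.fst (Finset.mem_filter.1 hw').2.1
        have hWcl : ∀ σ : Equiv.Perm (Fin N), (∀ a, a ∉ D.1 → σ a = a) →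
            ∀ w' ∈ W, σ * w' ∈ W := by
          intro σ hfix w' hw'
          rcases Finset.mem_filter.1 hw' with ⟨-, hcrs, hcl⟩
          have hB : (EE r).image ⇑w' = D.1 := congrArg Prod.fst hcrs
          have hcrs2 : crsP r (σ * w') = crsP r w' := crs_rot hF hfix hB
          refine Finset.mem_filter.2 ⟨Finset.mem_univ _, hcrs2.trans hcrs, ?_⟩
          rw [det_insP hF j hcrs2]
          exact hcl
        have hequi : ∑ w' ∈ W, q ^ majF (rRes r) w' = ∑ w' ∈ W, q ^ invF (rRes r) w' := by
          apply equidist_filter (ih (rRes r) hF') W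
            (fun w' => crsP r w' = D ∧ compLabelF r (insP j w') = C)
          · intro w'
            rw [hWdef]
            simp only [Finset.mem_filter, Finset.mem_univ, true_and]
          · intro w₁ w₂ he
            have h1 := crs_of_compLabel hF he
            have h2 := det_insP hF j h1
            rw [h1, h2]
        have hcard : ∀ w' ∈ W,
            ((EE r).filter (fun u => (j : ℕ) ≤ ((w' u : Fin N) : ℕ))).card =
              ((D.1).filter (fun b : Fin N => (j : ℕ) ≤ (b : ℕ))).card := by
          intro w' hw'
          rw [← hBW w' hw', Finset.filter_image,
            Finset.card_image_of_injective _ (Equiv.injective _)]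
        calc ∑ w' ∈ W, q ^ majF r (insP j w')
            = ∑ w' ∈ W, q ^ (majF (rRes r) w' +
                ∑ u ∈ (EE r).filter (fun u => ¬ (sUp (rRes r) u).Nonempty ∧
                  (j : ℕ) ≤ ((w' u : Fin N) : ℕ)), hook (rRes r) u) := by
              apply Finset.sum_congr rfl
              intro w' _
              rw [maj_insP hF]
          _ = q ^ ((D.1.filter (fun b : Fin N => (j : ℕ) ≤ (b : ℕ))).card) *
                ∑ w' ∈ W, q ^ majF (rRes r) w' :=
              rot_sum hF' hEc' q W hBW hWcl (j : ℕ)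
          _ = q ^ ((D.1.filter (fun b : Fin N => (j : ℕ) ≤ (b : ℕ))).card) *
                ∑ w' ∈ W, q ^ invF (rRes r) w' := by rw [hequi]
          _ = ∑ w' ∈ W, q ^ (invF (rRes r) w' +
                ((D.1).filter (fun b : Fin N => (j : ℕ) ≤ (b : ℕ))).card) := by
              rw [Finset.mul_sum]
              apply Finset.sum_congr rfl
              intro w' _
              rw [pow_add, mul_comm]
          _ = ∑ w' ∈ W, q ^ invF r (insP j w') := by
              apply Finset.sum_congr rfl
              intro w' hw'
              rw [inv_insP hF, hcard w' hw']
      rw [htrans (fun w => q ^ majF r w), htrans (fun w => q ^ invF r w)]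
      apply Finset.sum_congr rfl
      intro j _
      apply Finset.sum_congr rfl
      intro D _
      exact hcore j D

end SecD

end
/-- The major index is equidistributed with the inversion number over labelings of a forest. -/
theorem stmt2 (n : ℕ) (r : Fin n → Fin n → Prop) (hF : IsForest r)
    (R : Type*) [CommRing R] (q : R) :
    ∑ w : Equiv.Perm (Fin n), q ^ majF r w = ∑ w : Equiv.Perm (Fin n), q ^ invF r w := by
  classical
  have h := equidist_filter (main_equidist q n r hF) univ (fun _ => True)
    (fun w => by simp) (fun _ _ _ => Iff.rfl)
  simpa using h
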